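/- arXiv:1209.2391 — 5 statements merged into one kernel-verified Lean document; each statement's English description precedes it below -/
import Mathlib

section
/- If L is a stable triplet cover of a fully-resolved X-tree T with n := |X| ≥ 3, then |L| = 2n − 3. -/
open SimpleGraph

/-- An `X`-tree: a finite tree whose leaf set is (the image of) `X`,
with no vertices of degree 2. -/
structure XTree (α : Type) (X : Set α) where
  V : Type
  fintypeV : Fintype V
  tree : SimpleGraph V
  isTree : tree.IsTree
  ι : α → V
  ι_injOn : Set.InjOn ι X
  leaf_iff : ∀ v : V, (tree.neighborSet v).ncard = 1 ↔ v ∈ ι '' X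
  no_deg_two : ∀ v : V, (tree.neighborSet v).ncard ≠ 2

namespace XTree

variable {α : Type} {X : Set α}

/-- A vertex is interior if it is not a leaf. -/
def IsInterior (T : XTree α X) (v : T.V) : Prop := v ∉ T.ι '' X

/-- Fully-resolved: every interior vertex has degree 3. -/
def IsFullyResolved (T : XTree α X) : Prop :=
  ∀ v : T.V, T.IsInterior v → (T.tree.neighborSet v).ncard = 3

/-- The unique path between two vertices of the tree. -/
noncomputable def treePath (T : XTree α X) (u v : T.V) : T.tree.Walk u v :=
  (T.isTree.existsUnique_path u v).exists.choose

lemma treePath_isPath (T : XTree α X) (u v : T.V) : (T.treePath u v).IsPath :=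
  (T.isTree.existsUnique_path u v).exists.choose_spec

/-- Weighted path distance between two vertices. -/
noncomputable def pathDist (T : XTree α X) (w : Sym2 T.V → ℝ) (u v : T.V) : ℝ :=
  ((T.treePath u v).edges.map w).sum

lemma treePath_symm (T : XTree α X) (u v : T.V) :
    T.treePath u v = (T.treePath v u).reverse :=
  (T.isTree.existsUnique_path u v).unique (T.treePath_isPath u v)
    ((T.treePath_isPath v u).reverse)

lemma pathDist_symm (T : XTree α X) (w : Sym2 T.V → ℝ) (u v : T.V) :
    T.pathDist w u v = T.pathDist w v u := by
  unfold pathDist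
  rw [treePath_symm, SimpleGraph.Walk.edges_reverse, List.map_reverse, List.sum_reverse]

/-- The induced distance on pairs of leaf labels. -/
noncomputable def cordDist (T : XTree α X) (w : Sym2 T.V → ℝ) : Sym2 α → ℝ :=
  Sym2.lift ⟨fun a b => T.pathDist w (T.ι a) (T.ι b),
    fun a b => T.pathDist_symm w (T.ι a) (T.ι b)⟩

/-- An edge-weighting assigns a nonnegative weight to every edge. -/
def IsEdgeWeighting (T : XTree α X) (w : Sym2 T.V → ℝ) : Prop :=
  ∀ e ∈ T.tree.edgeSet, 0 ≤ w e

/-- A proper edge-weighting gives positive weight to every interior edge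
(i.e. every edge not incident with a leaf). -/
def IsProperWeighting (T : XTree α X) (w : Sym2 T.V → ℝ) : Prop :=
  T.IsEdgeWeighting w ∧ ∀ e ∈ T.tree.edgeSet, (∀ v ∈ e, T.IsInterior v) → 0 < w e

/-- The set of cords (2-element subsets) of `X`. -/
def cords (X : Set α) : Set (Sym2 α) := {c | ¬ c.IsDiag ∧ ∀ a ∈ c, a ∈ X}

/-- Two weighted trees are `L`-isometric if their leaf distances agree on `L`. -/
def LIsometric (T : XTree α X) (w : Sym2 T.V → ℝ) (T' : XTree α X) (w' : Sym2 T'.V → ℝ)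
    (L : Set (Sym2 α)) : Prop :=
  ∀ c ∈ L, T.cordDist w c = T'.cordDist w' c

/-- `L` is an edge-weight lasso for `T`. -/
def IsEdgeWeightLasso (T : XTree α X) (L : Set (Sym2 α)) : Prop :=
  ∀ w w' : Sym2 T.V → ℝ, T.IsProperWeighting w → T.IsProperWeighting w' →
    LIsometric T w T w' L → ∀ e ∈ T.tree.edgeSet, w e = w' e

/-- Two `X`-trees are equivalent if there is a graph isomorphism fixing `X`. -/
def Equivalent (T T' : XTree α X) : Prop :=
  ∃ φ : T.tree ≃g T'.tree, ∀ a ∈ X, φ (T.ι a) = T'.ι a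

/-- `L` is a topological lasso for `T`. -/
def IsTopologicalLasso (T : XTree α X) (L : Set (Sym2 α)) : Prop :=
  ∀ (T' : XTree α X) (w : Sym2 T.V → ℝ) (w' : Sym2 T'.V → ℝ),
    T.IsProperWeighting w → T'.IsProperWeighting w' →
    LIsometric T w T' w' L → Equivalent T T'

/-- `L` is a strong lasso for `T`. -/
def IsStrongLasso (T : XTree α X) (L : Set (Sym2 α)) : Prop :=
  IsEdgeWeightLasso T L ∧ IsTopologicalLasso T L

/-- The set of leaf labels on the side of edge `e` containing endpoint `u`. -/
def sideSet (T : XTree α X) (e : Sym2 T.V) (u : T.V) : Set α :=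
  {a | a ∈ X ∧ (T.tree.deleteEdges {e}).Reachable (T.ι a) u}

/-- The clusters of `T`: leaf sets of the two components of `T - e`, over all edges `e`. -/
def clus (T : XTree α X) : Set (Set α) :=
  {A | ∃ e ∈ T.tree.edgeSet, ∃ u ∈ e, A = T.sideSet e u}

/-- A stable transversal for a collection of subsets of `α`. -/
def IsStableTransversal (C : Set (Set α)) (f : Set α → α) : Prop :=
  (∀ A ∈ C, f A ∈ A) ∧ ∀ A ∈ C, ∀ B ∈ C, f A ∈ B → B ⊆ A → f A = f B

/-- Leaf labels of the component of `T - v` containing the vertex `u`. -/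
def compSet (T : XTree α X) (v u : T.V) : Set α :=
  {a | a ∈ X ∧ ∃ p : T.tree.Walk (T.ι a) u, v ∉ p.support}

/-- The triplet cover `L_{(T,f)}` generated by a transversal `f`. -/
def tripletCoverOf (T : XTree α X) (f : Set α → α) : Set (Sym2 α) :=
  {c | ∃ v u₁ u₂ : T.V, T.IsInterior v ∧ T.tree.Adj v u₁ ∧ T.tree.Adj v u₂ ∧ u₁ ≠ u₂ ∧
    c = s(f (T.compSet v u₁), f (T.compSet v u₂))}

/-- `L` is a stable triplet cover of `T`. -/
def IsStableTripletCover (T : XTree α X) (L : Set (Sym2 α)) : Prop :=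
  ∃ f : Set α → α, IsStableTransversal (clus T) f ∧ L = tripletCoverOf T f

/-- `T|{a,b,c,d}` is the quartet tree `ab||cd`: the four leaves are distinct members
of `X` and the path from `a` to `b` is vertex-disjoint from the path from `c` to `d`. -/
def Quartet (T : XTree α X) (a b c d : α) : Prop :=
  a ∈ X ∧ b ∈ X ∧ c ∈ X ∧ d ∈ X ∧ List.Pairwise (· ≠ ·) [a, b, c, d] ∧
  ∀ (p : T.tree.Walk (T.ι a) (T.ι b)) (q : T.tree.Walk (T.ι c) (T.ι d)),
    p.IsPath → q.IsPath → ∀ v, v ∈ p.support → v ∉ q.support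

/-- The cord `c` admits pivots relative to already-available cords `L ∪ earlier`. -/
def HasPivots (T : XTree α X) (L : Set (Sym2 α)) (earlier : List (Sym2 α))
    (c : Sym2 α) : Prop :=
  ∃ a b p q : α, c = s(a, b) ∧ Quartet T a p q b ∧
    ∀ c' ∈ [s(a, p), s(a, q), s(b, p), s(b, q), s(p, q)], c' ∈ L ∨ c' ∈ earlier

/-- `ord` is a shellable ordering of `cords X - L` with respect to `T`. -/
def IsShellableOrdering (T : XTree α X) (L : Set (Sym2 α)) (ord : List (Sym2 α)) : Prop :=
  ord.Nodup ∧ (∀ c, c ∈ ord ↔ c ∈ cords X \ L) ∧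
  ∀ i (h : i < ord.length), HasPivots T L (ord.take i) (ord.get ⟨i, h⟩)

/-- `L` is a shellable lasso for `T`: `L ⊆ cords X`, every element of `X` occurs in some
cord of `L`, and `cords X - L` admits a shellable ordering. -/
def IsShellableLasso (T : XTree α X) (L : Set (Sym2 α)) : Prop :=
  L ⊆ cords X ∧ (∀ a ∈ X, ∃ c ∈ L, a ∈ c) ∧ ∃ ord, IsShellableOrdering T L ord

/-- The graph `(Xs, L)` is a 2d-tree. -/
def Is2dTree (Xs : Set α) (L : Set (Sym2 α)) : Prop :=
  ∃ ord : List α, ord.Nodup ∧ (∀ a, a ∈ ord ↔ a ∈ Xs) ∧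
    ∃ h2 : 2 ≤ ord.length,
      s(ord.get ⟨0, by omega⟩, ord.get ⟨1, by omega⟩) ∈ L ∧
      ∀ i (h : i < ord.length), 2 ≤ i →
        {b | b ∈ ord.take i ∧ s(ord.get ⟨i, h⟩, b) ∈ L}.ncard = 2

/-- Leaves `x` and `y` form a cherry of `T`. -/
def IsCherry (T : XTree α X) (x y : α) : Prop :=
  x ≠ y ∧ x ∈ X ∧ y ∈ X ∧ ∃ v : T.V, T.tree.Adj (T.ι x) v ∧ T.tree.Adj (T.ι y) v

/-- `T'` is (equivalent to) the restriction `T|Y` of `T` to `Y ⊆ X`, characterized by the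
fact that the clusters of `T|Y` are exactly the nonempty proper restrictions to `Y`
of clusters of `T`. -/
def IsRestrictionOf {Y : Set α} (T' : XTree α Y) (T : XTree α X) : Prop :=
  Y ⊆ X ∧ clus T' = {A | (∃ B ∈ clus T, A = B ∩ Y) ∧ A.Nonempty ∧ A ≠ Y}

open Classical in
/-- One application of the extension rule (R), acting on a state consisting of
the current set of cords together with the current distance values. -/
def RStep (Xs : Set α) (S S' : Set (Sym2 α) × (Sym2 α → ℝ)) : Prop :=
  ∃ x y u z : α, x ∈ Xs ∧ y ∈ Xs ∧ u ∈ Xs ∧ z ∈ Xs ∧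
    List.Pairwise (· ≠ ·) [x, y, u, z] ∧
    s(x, y) ∈ S.1 ∧ s(y, u) ∈ S.1 ∧ s(y, z) ∈ S.1 ∧ s(x, u) ∈ S.1 ∧ s(u, z) ∈ S.1 ∧
    s(x, z) ∉ S.1 ∧
    S.2 s(x, y) + S.2 s(u, z) < S.2 s(x, u) + S.2 s(y, z) ∧
    S'.1 = insert s(x, z) S.1 ∧
    S'.2 = Function.update S.2 s(x, z) (S.2 s(x, u) + S.2 s(y, z) - S.2 s(y, u))

/-- `S` is the result `cl_R(L)` (with its `d`-values) of exhaustively applying rule (R)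
starting from `L` with initial distance values `d`. -/
def IsRClosureOf (Xs : Set α) (L : Set (Sym2 α)) (d : Sym2 α → ℝ)
    (S : Set (Sym2 α) × (Sym2 α → ℝ)) : Prop :=
  Relation.ReflTransGen (RStep Xs) (L, d) S ∧ ∀ S', ¬ RStep Xs S S'

end XTree
namespace XTree

open SimpleGraph Walk
open scoped Classical

variable {α : Type} {X : Set α} (T : XTree α X)

lemma treePath_eq {u v : T.V} (p : T.tree.Walk u v) (hp : p.IsPath) :
    T.treePath u v = p :=
  (T.isTree.existsUnique_path u v).unique (T.treePath_isPath u v) hp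

lemma treePath_support_subset {u v : T.V} (p : T.tree.Walk u v) :
    (T.treePath u v).support ⊆ p.support := by
  rw [treePath_eq T p.bypass p.bypass_isPath]
  exact p.support_bypass_subset

/-- vertices on the `u`-side of vertex `v`. -/
def compv (v u : T.V) : Set T.V := {x | ∃ p : T.tree.Walk x u, v ∉ p.support}

lemma mem_compSet {v u : T.V} {a : α} :
    a ∈ T.compSet v u ↔ a ∈ X ∧ T.ι a ∈ T.compv v u := Iff.rfl

lemma ne_left_of_mem_compv {v u x : T.V} (h : x ∈ T.compv v u) : x ≠ v := by
  obtain ⟨p, hp⟩ := h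
  rintro rfl; exact hp p.start_mem_support

lemma ne_right_of_mem_compv {v u x : T.V} (h : x ∈ T.compv v u) : u ≠ v := by
  obtain ⟨p, hp⟩ := h
  rintro rfl; exact hp p.end_mem_support

lemma mem_compv_self {v u : T.V} (h : u ≠ v) : u ∈ T.compv v u :=
  ⟨Walk.nil, by simpa using h.symm⟩

lemma mem_compv_extend {v u x y : T.V} (h : x ∈ T.compv v u) (q : T.tree.Walk y x)
    (hq : v ∉ q.support) : y ∈ T.compv v u := by
  obtain ⟨p, hp⟩ := h
  refine ⟨q.append p, ?_⟩
  rw [Walk.support_append]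
  intro hmem
  rcases List.mem_append.mp hmem with h' | h'
  · exact hq h'
  · exact hp (List.mem_of_mem_tail h')

lemma exists_penult {x v : T.V} (p : T.tree.Walk x v) (hp : p.IsPath) (hxv : x ≠ v) :
    ∃ u, T.tree.Adj v u ∧ x ∈ T.compv v u ∧ u ∈ p.support := by
  have hnil : ¬ p.reverse.Nil := by
    rw [Walk.nil_iff_length_eq, Walk.length_reverse]
    intro h; exact hxv (Walk.eq_of_length_eq_zero h)
  obtain ⟨u, h, q, hq⟩ := Walk.not_nil_iff.mp hnil
  have hrp : p.reverse.IsPath := hp.reverse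
  rw [hq, Walk.cons_isPath_iff] at hrp
  refine ⟨u, h, ⟨q.reverse, by simpa using hrp.2⟩, ?_⟩
  have : u ∈ p.reverse.support := by rw [hq]; simp
  simpa using this

lemma exists_compv {x v : T.V} (hxv : x ≠ v) : ∃ u, T.tree.Adj v u ∧ x ∈ T.compv v u := by
  obtain ⟨u, h1, h2, _⟩ := T.exists_penult (T.treePath x v) (T.treePath_isPath x v) hxv
  exact ⟨u, h1, h2⟩

lemma compv_unique {x v u₁ u₂ : T.V} (h₁ : T.tree.Adj v u₁) (h₂ : T.tree.Adj v u₂)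
    (hx₁ : x ∈ T.compv v u₁) (hx₂ : x ∈ T.compv v u₂) : u₁ = u₂ := by
  by_contra hne
  obtain ⟨p₁, hp₁⟩ := hx₁
  obtain ⟨p₂, hp₂⟩ := hx₂
  have hwp : (p₁.reverse.append p₂).bypass.IsPath := Walk.bypass_isPath _
  have hvw : v ∉ (p₁.reverse.append p₂).bypass.support := by
    intro h
    have h' := Walk.support_bypass_subset _ h
    rw [Walk.support_append] at h'
    rcases List.mem_append.mp h' with h'' | h''
    · exact hp₁ (by simpa using h'')
    · exact hp₂ (List.mem_of_mem_tail h'')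
  have hP : (Walk.cons h₁ (p₁.reverse.append p₂).bypass).IsPath := by
    rw [Walk.cons_isPath_iff]; exact ⟨hwp, hvw⟩
  have hQ : (Walk.cons h₂ (Walk.nil : T.tree.Walk u₂ u₂)).IsPath := by
    simp [Walk.cons_isPath_iff, h₂.ne]
  have heq : Walk.cons h₁ (p₁.reverse.append p₂).bypass
      = Walk.cons h₂ (Walk.nil : T.tree.Walk u₂ u₂) :=
    (T.treePath_eq _ hP).symm.trans (T.treePath_eq _ hQ)
  have hu : u₁ ∈ (Walk.cons h₂ (Walk.nil : T.tree.Walk u₂ u₂)).support := by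
    rw [← heq]; simp
  simp only [Walk.support_cons, Walk.support_nil, List.mem_cons, List.not_mem_nil] at hu
  rcases hu with h | h | h
  · exact h₁.ne' h
  · exact hne h
  · exact h

lemma mem_treePath_of_compv {x v u : T.V} (h : T.tree.Adj v u) (hx : x ∈ T.compv v u) :
    u ∈ (T.treePath x v).support := by
  obtain ⟨p, hp⟩ := hx
  have hvb : v ∉ p.bypass.support := fun hh => hp (p.support_bypass_subset hh)
  have hP : (Walk.cons h p.bypass.reverse).IsPath := by
    rw [Walk.cons_isPath_iff]
    exact ⟨(p.bypass_isPath).reverse, by simpa using hvb⟩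
  have heq : T.treePath v x = Walk.cons h p.bypass.reverse := T.treePath_eq _ hP
  have : u ∈ (T.treePath v x).support := by rw [heq]; simp
  rw [T.treePath_symm x v]
  simpa using this

lemma compv_subset {v u w t t' : T.V} (hvu : T.tree.Adj v u) (hw : w ∈ T.compv v u)
    (hwt : T.tree.Adj w t) (hv : v ∈ T.compv w t) (hwt' : T.tree.Adj w t') (hne : t' ≠ t) :
    T.compv w t' ⊆ T.compv v u := by
  rintro x ⟨p₀, hp₀⟩
  set p := p₀.bypass with hpdef
  have hwp : w ∉ p.support := fun hh => hp₀ (Walk.support_bypass_subset _ hh)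
  have hvp : v ∉ p.support := by
    intro hvp
    have hdrop : w ∉ (p.dropUntil v hvp).support :=
      fun hh => hwp (Walk.support_dropUntil_subset _ _ hh)
    have hv' : v ∈ T.compv w t' := ⟨p.dropUntil v hvp, hdrop⟩
    exact hne (T.compv_unique hwt' hwt hv' hv)
  obtain ⟨q, hq⟩ := hw
  refine ⟨p.append (Walk.cons hwt'.symm q), ?_⟩
  rw [Walk.support_append]
  intro hmem
  rcases List.mem_append.mp hmem with h | h
  · exact hvp h
  · rw [Walk.support_cons] at h
    exact hq (by simpa using h)

lemma compv_of_mem_path {v w z u : T.V} (hu : T.tree.Adj v u) (hw : w ∈ T.compv v u)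
    (hz : z ∈ (T.treePath v w).support) (hzv : z ≠ v) : z ∈ T.compv v u := by
  set p := T.treePath v w with hpdef
  have hps : p.IsPath := T.treePath_isPath v w
  have hvdrop : v ∉ (p.dropUntil z hz).support := by
    intro hvd
    have h1 : v ∈ (p.takeUntil z hz).support := Walk.start_mem_support _
    have h2 : v ∈ (p.dropUntil z hz).support.tail := by
      have hc := (p.dropUntil z hz).support_eq_cons
      rw [hc] at hvd
      rcases List.mem_cons.mp hvd with h | h
      · exact absurd h.symm hzv
      · exact h
    have hnodup := hps.support_nodup
    rw [← p.take_spec hz, Walk.support_append] at hnodup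
    exact (List.nodup_append'.mp hnodup).2.2 h1 h2
  obtain ⟨q, hq⟩ := hw
  refine ⟨(p.dropUntil z hz).append q, ?_⟩
  rw [Walk.support_append]
  intro hmem
  rcases List.mem_append.mp hmem with h | h
  · exact hvdrop h
  · exact hq (List.mem_of_mem_tail h)

/-- The neighbour of `v` in the direction of `w`. -/
noncomputable def tow (v w : T.V) : T.V :=
  if h : ∃ u, T.tree.Adj v u ∧ w ∈ T.compv v u then h.choose else v

lemma tow_spec {v w : T.V} (h : w ≠ v) :
    T.tree.Adj v (T.tow v w) ∧ w ∈ T.compv v (T.tow v w) := by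
  have hex := T.exists_compv h
  rw [tow, dif_pos hex]
  exact hex.choose_spec

lemma tow_eq {v w u : T.V} (hu : T.tree.Adj v u) (hw : w ∈ T.compv v u) : T.tow v w = u := by
  have hs := T.tow_spec (T.ne_left_of_mem_compv hw)
  exact T.compv_unique hs.1 hu hs.2 hw

end XTree

namespace XTree

open SimpleGraph Walk
open scoped Classical

variable {α : Type} {X : Set α} (T : XTree α X)

attribute [local instance] XTree.fintypeV

lemma support_mapLe {v u : T.V} (h : T.tree.deleteEdges {s(v,u)} ≤ T.tree)
    {x y : T.V} (p : (T.tree.deleteEdges {s(v,u)}).Walk x y) :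
    (p.mapLe h).support = p.support := by
  unfold Walk.mapLe
  rw [Walk.support_map]
  exact List.map_id _

lemma edges_mapLe {v u : T.V} (h : T.tree.deleteEdges {s(v,u)} ≤ T.tree)
    {x y : T.V} (p : (T.tree.deleteEdges {s(v,u)}).Walk x y) :
    (p.mapLe h).edges = p.edges := by
  unfold Walk.mapLe
  rw [Walk.edges_map]
  have h1 : (Sym2.map ⇑(Hom.ofLE h)) = id := Sym2.map_id'
  rw [h1]
  exact List.map_id _

lemma compSet_mem_clus {v u : T.V} (h : T.tree.Adj v u) : T.compSet v u ∈ clus T := by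
  refine ⟨s(v,u), (T.tree.mem_edgeSet).mpr h, u, by simp, ?_⟩
  ext a
  simp only [compSet, sideSet, Set.mem_setOf_eq]
  constructor
  · rintro ⟨ha, p, hp⟩
    refine ⟨ha, ?_⟩
    have hedges : ∀ e ∈ p.edges, e ∉ ({s(v,u)} : Set (Sym2 T.V)) := by
      intro e he hmem
      rw [Set.mem_singleton_iff] at hmem
      subst hmem
      exact hp (p.fst_mem_support_of_mem_edges he)
    exact ⟨p.toDeleteEdges _ hedges⟩
  · rintro ⟨ha, ⟨q⟩⟩
    refine ⟨ha, ?_⟩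
    have hle : T.tree.deleteEdges {s(v,u)} ≤ T.tree := T.tree.deleteEdges_le _
    have hpp := q.bypass_isPath
    set p := q.bypass with hpdef
    by_cases hv : v ∈ p.support
    · exfalso
      have hd : (p.dropUntil v hv).IsPath := hpp.dropUntil _
      have hdm : ((p.dropUntil v hv).mapLe hle).IsPath := hd.mapLe _
      have h1 : T.treePath v u = (p.dropUntil v hv).mapLe hle := T.treePath_eq _ hdm
      have h2 : T.treePath v u = Walk.cons h Walk.nil :=
        T.treePath_eq _ (by simp [Walk.cons_isPath_iff, h.ne])
      have hmem : s(v,u) ∈ ((p.dropUntil v hv).mapLe hle).edges := by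
        rw [← h1, h2]; simp
      rw [T.edges_mapLe hle] at hmem
      have := (p.dropUntil v hv).edges_subset_edgeSet hmem
      rw [edgeSet_deleteEdges] at this
      exact this.2 rfl
    · exact ⟨p.mapLe hle, by rwa [T.support_mapLe hle]⟩

lemma compSet_subset_X {v u : T.V} : T.compSet v u ⊆ X := fun _ h => h.1

lemma compv_not_both {v w x : T.V} (hadj : T.tree.Adj v w)
    (h1 : x ∈ T.compv v w) (h2 : x ∈ T.compv w v) : False := by
  obtain ⟨p₀, hp₀⟩ := h2
  have hxv : x ≠ v := T.ne_left_of_mem_compv h1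
  have hb : p₀.bypass.IsPath := p₀.bypass_isPath
  have hwb : w ∉ p₀.bypass.support := fun hh => hp₀ (p₀.support_bypass_subset hh)
  obtain ⟨u', hu', hxu', hu'mem⟩ := T.exists_penult p₀.bypass hb hxv
  have : u' = w := T.compv_unique hu' hadj hxu' h1
  exact hwb (this ▸ hu'mem)

lemma interior_of_two_neighbors {z x y : T.V} (hx : T.tree.Adj z x)
    (hy : T.tree.Adj z y) (hxy : x ≠ y) : T.IsInterior z := by
  intro hz
  have h1 := (T.leaf_iff z).mpr hz
  have h2 : 1 < (T.tree.neighborSet z).ncard := by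
    rw [Set.one_lt_ncard_iff (Set.toFinite _)]
    exact ⟨x, y, hx, hy, hxy⟩
  omega

lemma interior_of_internal {v w z : T.V} (p : T.tree.Walk v w) (hp : p.IsPath)
    (hz : z ∈ p.support) (hzv : z ≠ v) (hzw : z ≠ w) : T.IsInterior z := by
  have htk : ¬ (p.takeUntil z hz).reverse.Nil := by
    rw [Walk.nil_iff_length_eq, Walk.length_reverse]
    intro h
    exact hzv (Walk.eq_of_length_eq_zero h).symm
  obtain ⟨x, hxadj, q, hq⟩ := Walk.not_nil_iff.mp htk
  have hdr : ¬ (p.dropUntil z hz).Nil := by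
    rw [Walk.nil_iff_length_eq]
    intro h
    exact hzw (Walk.eq_of_length_eq_zero h)
  obtain ⟨y, hyadj, q', hq'⟩ := Walk.not_nil_iff.mp hdr
  refine T.interior_of_two_neighbors hxadj hyadj ?_
  intro hxy
  subst hxy
  have hx1 : x ∈ (p.takeUntil z hz).support := by
    have : x ∈ (p.takeUntil z hz).reverse.support := by rw [hq]; simp
    simpa using this
  have hx2 : x ∈ (p.dropUntil z hz).support.tail := by
    have : (p.dropUntil z hz).support = z :: q'.support := by
      rw [hq', Walk.support_cons]
    rw [this]
    exact q'.start_mem_support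
  have hnodup := hp.support_nodup
  rw [← p.take_spec hz, Walk.support_append] at hnodup
  exact (List.nodup_append'.mp hnodup).2.2 hx1 hx2

lemma treePath_length_split {v w z : T.V} (hz : z ∈ (T.treePath v w).support) :
    (T.treePath v z).length + (T.treePath z w).length = (T.treePath v w).length := by
  have hps := T.treePath_isPath v w
  have h1 : T.treePath v z = (T.treePath v w).takeUntil z hz := T.treePath_eq _ (hps.takeUntil _)
  have h2 : T.treePath z w = (T.treePath v w).dropUntil z hz := T.treePath_eq _ (hps.dropUntil _)
  rw [h1, h2, ← Walk.length_append, ((T.treePath v w).take_spec hz)]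

lemma treePath_length_symm (v w : T.V) :
    (T.treePath v w).length = (T.treePath w v).length := by
  rw [T.treePath_symm v w, Walk.length_reverse]

end XTree

namespace XTree

open SimpleGraph Walk
open scoped Classical

variable {α : Type} {X : Set α} (T : XTree α X)

attribute [local instance] XTree.fintypeV

/-- The interior vertices, as a finset. -/
noncomputable def intF : Finset T.V := Finset.univ.filter (fun v => T.IsInterior v)

/-- The cords generated at a vertex. -/
noncomputable def cordsAt (f : Set α → α) (v : T.V) : Finset (Sym2 α) :=
  (T.tree.neighborFinset v).offDiag.image
    (fun p => s(f (T.compSet v p.1), f (T.compSet v p.2)))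

lemma mem_cordsAt {f : Set α → α} {v : T.V} {c : Sym2 α} :
    c ∈ cordsAt T f v ↔ ∃ u₁ u₂, T.tree.Adj v u₁ ∧ T.tree.Adj v u₂ ∧ u₁ ≠ u₂ ∧
      c = s(f (T.compSet v u₁), f (T.compSet v u₂)) := by
  unfold cordsAt
  simp only [Finset.mem_image, Finset.mem_offDiag, mem_neighborFinset, Prod.exists]
  constructor
  · rintro ⟨u₁, u₂, ⟨h1, h2, h3⟩, h4⟩; exact ⟨u₁, u₂, h1, h2, h3, h4.symm⟩
  · rintro ⟨u₁, u₂, h1, h2, h3, h4⟩; exact ⟨u₁, u₂, ⟨h1, h2, h3⟩, h4.symm⟩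

lemma f_mem {f : Set α → α} (hf : IsStableTransversal (clus T) f) {v u : T.V}
    (h : T.tree.Adj v u) : f (T.compSet v u) ∈ T.compSet v u :=
  hf.1 _ (T.compSet_mem_clus h)

lemma f_inj {f : Set α → α} (hf : IsStableTransversal (clus T) f) {v u₁ u₂ : T.V}
    (h₁ : T.tree.Adj v u₁) (h₂ : T.tree.Adj v u₂)
    (he : f (T.compSet v u₁) = f (T.compSet v u₂)) : u₁ = u₂ := by
  have m₁ := T.f_mem hf h₁
  have m₂ := T.f_mem hf h₂
  rw [he] at m₁
  exact T.compv_unique h₁ h₂ m₁.2 m₂.2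

lemma stab {f : Set α → α} (hf : IsStableTransversal (clus T) f) {v u w t : T.V}
    (hvu : T.tree.Adj v u) (hwt : T.tree.Adj w t)
    (hmem : f (T.compSet v u) ∈ T.compSet w t) (hsub : T.compSet w t ⊆ T.compSet v u) :
    f (T.compSet v u) = f (T.compSet w t) :=
  hf.2 _ (T.compSet_mem_clus hvu) _ (T.compSet_mem_clus hwt) hmem hsub

lemma compSet_mono {v u w t : T.V} (h : T.compv v u ⊆ T.compv w t) :
    T.compSet v u ⊆ T.compSet w t := fun _ ha => ⟨ha.1, h ha.2⟩

lemma exists_other (hT : T.IsFullyResolved) {v w : T.V} (hv : T.IsInterior v)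
    (hw : T.tree.Adj v w) : ∃ s, T.tree.Adj v s ∧ s ≠ w := by
  by_contra hc
  push_neg at hc
  have hsub : T.tree.neighborSet v ⊆ {w} := fun s hs => hc s hs
  have hle := Set.ncard_le_ncard hsub (Set.finite_singleton w)
  rw [hT v hv, Set.ncard_singleton] at hle
  omega

lemma cordsAt_card (hT : T.IsFullyResolved) {f : Set α → α}
    (hf : IsStableTransversal (clus T) f) {v : T.V} (hv : T.IsInterior v) :
    (cordsAt T f v).card = 3 := by
  have hdeg : (T.tree.neighborFinset v).card = 3 := by
    rw [neighborFinset_def, ← Set.ncard_eq_toFinset_card']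
    exact hT v hv
  obtain ⟨u₁, u₂, u₃, h12, h13, h23, hN⟩ := Finset.card_eq_three.mp hdeg
  have a₁ : T.tree.Adj v u₁ := by rw [← mem_neighborFinset, hN]; simp
  have a₂ : T.tree.Adj v u₂ := by rw [← mem_neighborFinset, hN]; simp
  have a₃ : T.tree.Adj v u₃ := by rw [← mem_neighborFinset, hN]; simp
  set g : T.V → α := fun u => f (T.compSet v u) with hg
  have hgne : ∀ {x y : T.V}, T.tree.Adj v x → T.tree.Adj v y → x ≠ y → g x ≠ g y :=
    fun hx hy hxy h => hxy (T.f_inj hf hx hy h)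
  have hEq : cordsAt T f v = {s(g u₁, g u₂), s(g u₁, g u₃), s(g u₂, g u₃)} := by
    ext c
    simp only [Finset.mem_insert, Finset.mem_singleton]
    rw [mem_cordsAt]
    constructor
    · rintro ⟨x, y, hx, hy, hxy, rfl⟩
      have hx' : x ∈ ({u₁, u₂, u₃} : Finset T.V) := by
        rw [← hN, mem_neighborFinset]; exact hx
      have hy' : y ∈ ({u₁, u₂, u₃} : Finset T.V) := by
        rw [← hN, mem_neighborFinset]; exact hy
      simp only [Finset.mem_insert, Finset.mem_singleton] at hx' hy'
      rcases hx' with rfl | rfl | rfl <;> rcases hy' with rfl | rfl | rfl <;>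
        first
          | exact absurd rfl hxy
          | exact Or.inl rfl
          | exact Or.inl (Sym2.eq_swap)
          | exact Or.inr (Or.inl rfl)
          | exact Or.inr (Or.inl (Sym2.eq_swap))
          | exact Or.inr (Or.inr rfl)
          | exact Or.inr (Or.inr (Sym2.eq_swap))
    · rintro (rfl | rfl | rfl)
      exacts [⟨u₁, u₂, a₁, a₂, h12, rfl⟩, ⟨u₁, u₃, a₁, a₃, h13, rfl⟩,
        ⟨u₂, u₃, a₂, a₃, h23, rfl⟩]
  have hne1 : s(g u₁, g u₂) ∉ ({s(g u₁, g u₃), s(g u₂, g u₃)} : Finset (Sym2 α)) := by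
    simp only [Finset.mem_insert, Finset.mem_singleton]
    rintro (h | h) <;> rcases Sym2.eq_iff.mp h with ⟨e1, e2⟩ | ⟨e1, e2⟩
    · exact hgne a₂ a₃ h23 e2
    · exact hgne a₁ a₃ h13 e1
    · exact hgne a₁ a₂ h12 e1
    · exact hgne a₁ a₃ h13 e1
  have hne2 : s(g u₁, g u₃) ∉ ({s(g u₂, g u₃)} : Finset (Sym2 α)) := by
    simp only [Finset.mem_singleton]
    intro h
    rcases Sym2.eq_iff.mp h with ⟨e1, e2⟩ | ⟨e1, e2⟩
    · exact hgne a₁ a₂ h12 e1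
    · exact hgne a₁ a₃ h13 e1
  rw [hEq, Finset.card_insert_of_notMem hne1, Finset.card_insert_of_notMem hne2,
    Finset.card_singleton]

lemma claimA_exists {f : Set α → α} (hf : IsStableTransversal (clus T) f)
    {v w : T.V} (hv : T.IsInterior v) (hw : T.IsInterior w) (hadj : T.tree.Adj v w) :
    ∃ c, c ∈ cordsAt T f v ∧ c ∈ cordsAt T f w := by
  have hmaj : ∀ (v w : T.V), T.IsInterior w → T.tree.Adj v w →
      ∃ t, T.tree.Adj w t ∧ t ≠ v ∧ f (T.compSet v w) = f (T.compSet w t) := by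
    intro v w hw hadj
    have hfm := T.f_mem hf hadj
    have hx : T.ι (f (T.compSet v w)) ∈ T.compv v w := hfm.2
    have hne : T.ι (f (T.compSet v w)) ≠ w := by
      intro h
      exact hw ⟨f (T.compSet v w), hfm.1, h⟩
    obtain ⟨t, ht, hxt⟩ := T.exists_compv hne
    have htv : t ≠ v := by
      rintro rfl
      exact T.compv_not_both hadj hx hxt
    have hsubv : T.compv w t ⊆ T.compv v w :=
      T.compv_subset hadj (T.mem_compv_self hadj.ne') hadj.symm
        (T.mem_compv_self hadj.ne) ht htv
    exact ⟨t, ht, htv, T.stab hf hadj ht ⟨hfm.1, hxt⟩ (T.compSet_mono hsubv)⟩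
  obtain ⟨t, ht, htv, heq1⟩ := hmaj v w hw hadj
  obtain ⟨s, hs, hsw, heq2⟩ := hmaj w v hv hadj.symm
  refine ⟨s(f (T.compSet v s), f (T.compSet v w)), ?_, ?_⟩
  · exact (mem_cordsAt T).mpr ⟨s, w, hs, hadj, hsw, rfl⟩
  · rw [← heq2, heq1]
    exact (mem_cordsAt T).mpr ⟨v, t, hadj.symm, ht, fun h => htv h.symm, rfl⟩

lemma compv_subset_of_ne_tow {v w : T.V} (hvw : w ≠ v) {a : T.V} (ha : T.tree.Adj v a)
    (hne : a ≠ T.tow v w) : T.compv v a ⊆ T.compv w (T.tow w v) := by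
  obtain ⟨h1, h2⟩ := T.tow_spec hvw
  obtain ⟨h3, h4⟩ := T.tow_spec (Ne.symm hvw)
  exact T.compv_subset h3 h4 h1 h2 ha hne

lemma NF1 {f : Set α → α} (hf : IsStableTransversal (clus T) f)
    {v w : T.V} {c : Sym2 α} (hvw : v ≠ w)
    (hv : c ∈ cordsAt T f v) (hw : c ∈ cordsAt T f w) :
    ∃ a, T.tree.Adj v a ∧ a ≠ T.tow v w ∧
      c = s(f (T.compSet v a), f (T.compSet v (T.tow v w))) := by
  obtain ⟨a₁, a₂, h1, h2, h12, rfl⟩ := (mem_cordsAt T).mp hv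
  by_cases e2 : a₂ = T.tow v w
  · subst e2
    exact ⟨a₁, h1, h12, rfl⟩
  by_cases e1 : a₁ = T.tow v w
  · subst e1
    exact ⟨a₂, h2, fun h => h12 h.symm, Sym2.eq_swap⟩
  exfalso
  have hsub1 : T.compv v a₁ ⊆ T.compv w (T.tow w v) :=
    T.compv_subset_of_ne_tow (Ne.symm hvw) h1 e1
  have hsub2 : T.compv v a₂ ⊆ T.compv w (T.tow w v) :=
    T.compv_subset_of_ne_tow (Ne.symm hvw) h2 e2
  obtain ⟨b₁, b₂, g1, g2, g12, hc⟩ := (mem_cordsAt T).mp hw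
  have key : ∀ b, T.tree.Adj w b → b ≠ T.tow w v →
      (f (T.compSet w b) = f (T.compSet v a₁) ∨ f (T.compSet w b) = f (T.compSet v a₂)) →
      False := by
    intro b gb gne gor
    have hmemb := T.f_mem hf gb
    have hin : T.ι (f (T.compSet w b)) ∈ T.compv w (T.tow w v) := by
      rcases gor with h | h
      · rw [h]; exact hsub1 (T.f_mem hf h1).2
      · rw [h]; exact hsub2 (T.f_mem hf h2).2
    exact gne (T.compv_unique gb (T.tow_spec hvw).1 hmemb.2 hin)
  by_cases hb1 : b₁ = T.tow w v
  · rcases Sym2.eq_iff.mp hc with ⟨x1, x2⟩ | ⟨x1, x2⟩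
    · exact key b₂ g2 (fun h => g12 (hb1.trans h.symm)) (Or.inr x2.symm)
    · exact key b₂ g2 (fun h => g12 (hb1.trans h.symm)) (Or.inl x1.symm)
  · rcases Sym2.eq_iff.mp hc with ⟨x1, x2⟩ | ⟨x1, x2⟩
    · exact key b₁ g1 hb1 (Or.inl x1.symm)
    · exact key b₁ g1 hb1 (Or.inr x2.symm)

lemma NF {f : Set α → α} (hf : IsStableTransversal (clus T) f)
    {v w : T.V} {c : Sym2 α} (hvw : v ≠ w)
    (hv : c ∈ cordsAt T f v) (hw : c ∈ cordsAt T f w) :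
    ∃ a b, T.tree.Adj v a ∧ T.tree.Adj w b ∧ a ≠ T.tow v w ∧ b ≠ T.tow w v ∧
      c = s(f (T.compSet v a), f (T.compSet v (T.tow v w))) ∧
      f (T.compSet v a) = f (T.compSet w (T.tow w v)) ∧
      f (T.compSet v (T.tow v w)) = f (T.compSet w b) := by
  obtain ⟨a, ha, hane, hav⟩ := T.NF1 hf hvw hv hw
  obtain ⟨b, hb, hbne, hbw⟩ := T.NF1 hf (Ne.symm hvw) hw hv
  have hx : T.ι (f (T.compSet v a)) ∈ T.compv w (T.tow w v) :=
    T.compv_subset_of_ne_tow (Ne.symm hvw) ha hane (T.f_mem hf ha).2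
  have hxne : f (T.compSet v a) ≠ f (T.compSet w b) := by
    intro h
    have h2 : T.ι (f (T.compSet w b)) ∈ T.compv w b := (T.f_mem hf hb).2
    rw [← h] at h2
    exact hbne (T.compv_unique hb (T.tow_spec hvw).1 h2 hx)
  rcases Sym2.eq_iff.mp (hav.symm.trans hbw) with ⟨h1, h2⟩ | ⟨h1, h2⟩
  · exact absurd h1 hxne
  · exact ⟨a, b, ha, hb, hane, hbne, hav, h1, h2⟩

lemma shared_unique {f : Set α → α} (hf : IsStableTransversal (clus T) f)
    {v w : T.V} {c c' : Sym2 α} (hvw : v ≠ w)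
    (h1 : c ∈ cordsAt T f v) (h2 : c ∈ cordsAt T f w)
    (h1' : c' ∈ cordsAt T f v) (h2' : c' ∈ cordsAt T f w) : c = c' := by
  obtain ⟨a, b, ha, hb, hane, hbne, hc, he1, he2⟩ := T.NF hf hvw h1 h2
  obtain ⟨a', b', ha', hb', hane', hbne', hc', he1', he2'⟩ := T.NF hf hvw h1' h2'
  have haa : a = a' := by
    have m1 : T.ι (f (T.compSet v a)) ∈ T.compv v a := (T.f_mem hf ha).2
    have m2 : T.ι (f (T.compSet v a')) ∈ T.compv v a' := (T.f_mem hf ha').2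
    rw [he1, ← he1'] at m1
    exact T.compv_unique ha ha' m1 m2
  subst haa
  rw [hc, hc']

lemma convex {f : Set α → α} (hf : IsStableTransversal (clus T) f)
    {v w z : T.V} {c : Sym2 α} (hv : T.IsInterior v) (hw : T.IsInterior w)
    (h1 : c ∈ cordsAt T f v) (h2 : c ∈ cordsAt T f w)
    (hz : z ∈ (T.treePath v w).support) : T.IsInterior z ∧ c ∈ cordsAt T f z := by
  by_cases hzv : z = v
  · subst hzv; exact ⟨hv, h1⟩
  by_cases hzw : z = w
  · subst hzw; exact ⟨hw, h2⟩
  have hvw : v ≠ w := by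
    rintro rfl
    have hnil : T.treePath v v = Walk.nil := T.treePath_eq _ (IsPath.nil)
    rw [hnil] at hz
    simp at hz
    exact hzv hz
  have hzint : T.IsInterior z := T.interior_of_internal _ (T.treePath_isPath v w) hz hzv hzw
  obtain ⟨hA1adj, hA1⟩ := T.tow_spec (show v ≠ z from fun h => hzv h.symm)
  obtain ⟨hA2adj, hA2⟩ := T.tow_spec (show w ≠ z from fun h => hzw h.symm)
  have hA12 : T.tow z v ≠ T.tow z w := by
    intro h
    obtain ⟨p₀, hp₀⟩ := hA1
    obtain ⟨q, hq⟩ := hA2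
    set p : T.tree.Walk v (T.tow z w) := p₀.copy rfl h with hpdef
    have hp : z ∉ p.support := by rwa [hpdef, Walk.support_copy]
    have hzs : z ∉ (p.append q.reverse).support := by
      rw [Walk.support_append]
      intro hm
      rcases List.mem_append.mp hm with hm | hm
      · exact hp hm
      · have := List.mem_of_mem_tail hm
        rw [Walk.support_reverse] at this
        exact hq (List.mem_reverse.mp this)
    exact hzs (T.treePath_support_subset _ hz)
  have hztow_v : z ∈ T.compv v (T.tow v w) :=
    T.compv_of_mem_path (T.tow_spec (Ne.symm hvw)).1 (T.tow_spec (Ne.symm hvw)).2 hz hzv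
  have hztow_w : z ∈ T.compv w (T.tow w v) := by
    refine T.compv_of_mem_path (T.tow_spec hvw).1 (T.tow_spec hvw).2 ?_ hzw
    rw [T.treePath_symm w v, Walk.support_reverse]
    exact List.mem_reverse.mpr hz
  obtain ⟨a, b, ha, hb, hane, hbne, hc, he1, he2⟩ := T.NF hf hvw h1 h2
  have inc1 : T.compv v a ⊆ T.compv z (T.tow z v) :=
    T.compv_subset hA1adj hA1 (T.tow_spec (Ne.symm hvw)).1 hztow_v ha hane
  have inc2 : T.compv w b ⊆ T.compv z (T.tow z w) :=
    T.compv_subset hA2adj hA2 (T.tow_spec hvw).1 hztow_w hb hbne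
  have inc3 : T.compv z (T.tow z w) ⊆ T.compv v (T.tow v w) :=
    T.compv_subset (T.tow_spec (Ne.symm hvw)).1 hztow_v hA1adj hA1 hA2adj (Ne.symm hA12)
  have inc4 : T.compv z (T.tow z v) ⊆ T.compv w (T.tow w v) :=
    T.compv_subset (T.tow_spec hvw).1 hztow_w hA2adj hA2 hA1adj hA12
  have st1 : f (T.compSet v (T.tow v w)) = f (T.compSet z (T.tow z w)) := by
    refine T.stab hf (T.tow_spec (Ne.symm hvw)).1 hA2adj ?_ (T.compSet_mono inc3)
    rw [he2]
    exact ⟨(T.f_mem hf hb).1, inc2 (T.f_mem hf hb).2⟩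
  have st2 : f (T.compSet w (T.tow w v)) = f (T.compSet z (T.tow z v)) := by
    refine T.stab hf (T.tow_spec hvw).1 hA1adj ?_ (T.compSet_mono inc4)
    rw [← he1]
    exact ⟨(T.f_mem hf ha).1, inc1 (T.f_mem hf ha).2⟩
  refine ⟨hzint, (mem_cordsAt T).mpr ⟨T.tow z v, T.tow z w, hA1adj, hA2adj, hA12, ?_⟩⟩
  rw [hc, he1, st2, st1]

lemma tow_interior {v r : T.V} (hv : T.IsInterior v) (hr : T.IsInterior r) (hvr : v ≠ r) :
    T.IsInterior (T.tow v r) := by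
  obtain ⟨hadj, hmem⟩ := T.tow_spec (Ne.symm hvr)
  have hsup : T.tow v r ∈ (T.treePath r v).support := T.mem_treePath_of_compv hadj hmem
  by_cases h : T.tow v r = r
  · rwa [h]
  · exact T.interior_of_internal _ (T.treePath_isPath r v) hsup h hadj.ne'

lemma tow_len {v r : T.V} (hvr : v ≠ r) :
    (T.treePath (T.tow v r) r).length < (T.treePath v r).length := by
  obtain ⟨hadj, hmem⟩ := T.tow_spec (Ne.symm hvr)
  have hsup : T.tow v r ∈ (T.treePath r v).support := T.mem_treePath_of_compv hadj hmem
  have hsup' : T.tow v r ∈ (T.treePath v r).support := by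
    rw [T.treePath_symm v r, Walk.support_reverse]
    exact List.mem_reverse.mpr hsup
  have hsplit := T.treePath_length_split hsup'
  have hpos : 0 < (T.treePath v (T.tow v r)).length := by
    rcases Nat.eq_zero_or_pos (T.treePath v (T.tow v r)).length with h | h
    · exact absurd (Walk.eq_of_length_eq_zero h) hadj.ne
    · exact h
  omega

lemma top_unique {r : T.V} {S : Finset T.V}
    (hconv : ∀ v ∈ S, ∀ w ∈ S, ∀ z ∈ (T.treePath v w).support, z ∈ S)
    {v v' : T.V} (hv : v ∈ S) (hv' : v' ∈ S)
    (htv : v = r ∨ T.tow v r ∉ S) (htv' : v' = r ∨ T.tow v' r ∉ S) : v = v' := by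
  by_contra hne
  have hside : ∀ x ∈ S, ∀ y, y ∈ S → x ≠ r → T.tow x r ∉ S →
      y ∉ T.compv x (T.tow x r) := by
    intro x hx y hy hxr htow hy'
    have hmem := T.mem_treePath_of_compv (T.tow_spec (Ne.symm hxr)).1 hy'
    exact htow (hconv y hy x hx _ hmem)
  by_cases hvr : v = r
  · subst hvr
    have hv'r : v' ≠ v := fun h => hne h.symm
    have htow' : T.tow v' v ∉ S := htv'.resolve_left hv'r
    exact hside v' hv' v hv hv'r htow' ((T.tow_spec (Ne.symm hv'r)).2)
  by_cases hv'r : v' = r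
  · subst hv'r
    have htow := htv.resolve_left hvr
    exact hside v hv v' hv' hvr htow ((T.tow_spec (Ne.symm hvr)).2)
  have htow := htv.resolve_left hvr
  have htow' := htv'.resolve_left hv'r
  have h1 := hside v hv v' hv' hvr htow
  have h2 := hside v' hv' v hv hv'r htow'
  have key : ∀ x y : T.V, x ≠ y → x ≠ r → y ∉ T.compv x (T.tow x r) →
      x ∈ (T.treePath r y).support := by
    intro x y hxy hxr hyc
    by_contra hmem
    have hyx : y ∈ T.compv x (T.tow x y) := (T.tow_spec (Ne.symm hxy)).2
    have hr1 : r ∈ T.compv x (T.tow x y) := T.mem_compv_extend hyx (T.treePath r y) hmem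
    have hr2 : r ∈ T.compv x (T.tow x r) := (T.tow_spec (Ne.symm hxr)).2
    have heq := T.compv_unique (T.tow_spec (Ne.symm hxy)).1 (T.tow_spec (Ne.symm hxr)).1 hr1 hr2
    exact hyc (heq ▸ hyx)
  have k1 : v ∈ (T.treePath r v').support := key v v' hne hvr h1
  have k2 : v' ∈ (T.treePath r v).support := key v' v (Ne.symm hne) hv'r h2
  have s1 := T.treePath_length_split k1
  have s2 := T.treePath_length_split k2
  have s3 := T.treePath_length_symm v v'
  have hlen : (T.treePath v v').length = 0 := by omega
  exact hne (Walk.eq_of_length_eq_zero hlen)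

end XTree

namespace XTree

open SimpleGraph Walk
open scoped Classical

variable {α : Type} {X : Set α} (T : XTree α X)

attribute [local instance] XTree.fintypeV

lemma card_int (hT : T.IsFullyResolved) : (intF T).card + 2 = X.ncard := by

  have hedge := T.isTree.card_edgeFinset
  have hhs := T.tree.sum_degrees_eq_twice_card_edges
  set LVS : Finset T.V := Finset.univ.filter (fun v => v ∈ T.ι '' X) with hLVS
  have hIF : intF T = Finset.univ.filter (fun v => ¬ (v ∈ T.ι '' X)) :=
    Finset.filter_congr (fun v _ => Iff.rfl)
  have hpart : LVS.card + (intF T).card = Fintype.card T.V := by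
    rw [hLVS, hIF]
    rw [Finset.card_filter_add_card_filter_not]
    exact Finset.card_univ
  have hdeg : ∀ v : T.V, T.tree.degree v = (T.tree.neighborSet v).ncard := by
    intro v
    rw [Set.ncard_eq_toFinset_card', ← neighborFinset_def]
    rfl
  have hsum : ∑ v, T.tree.degree v = LVS.card + 3 * (intF T).card := by
    rw [← Finset.sum_filter_add_sum_filter_not Finset.univ (fun v => v ∈ T.ι '' X)]
    have hA : ∑ v ∈ Finset.univ.filter (fun v => v ∈ T.ι '' X), T.tree.degree v
        = LVS.card := by
      rw [Finset.sum_congr rfl (fun v hv => ?_), Finset.sum_const, smul_eq_mul, mul_one,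
        hLVS]
      rw [hdeg v]
      exact (T.leaf_iff v).mpr (Finset.mem_filter.mp hv).2
    have hB : ∑ v ∈ Finset.univ.filter (fun v => ¬ (v ∈ T.ι '' X)), T.tree.degree v
        = 3 * (intF T).card := by
      rw [Finset.sum_congr rfl (fun v hv => ?_), Finset.sum_const, smul_eq_mul, mul_comm,
        hIF]
      rw [hdeg v]
      exact hT v (Finset.mem_filter.mp hv).2
    rw [hA, hB]
  have hL : LVS.card = X.ncard := by
    have h1 : (T.ι '' X).ncard = X.ncard := Set.ncard_image_of_injOn T.ι_injOn
    rw [← h1]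
    have h2 : LVS = (T.ι '' X).toFinset := by
      ext v; simp [hLVS, Set.mem_toFinset]
    rw [h2, ← Set.ncard_eq_toFinset_card']
  have e1 : LVS.card + (intF T).card = T.tree.edgeFinset.card + 1 := by
    rw [hpart, ← hedge]
  have e2 : LVS.card + 3 * (intF T).card = 2 * T.tree.edgeFinset.card := by
    rw [← hsum, hhs]
  omega

lemma tripletCoverOf_ncard (hcard : 3 ≤ X.ncard)
    (hT : T.IsFullyResolved) (f : Set α → α) (hf : IsStableTransversal (clus T) f) :
    (tripletCoverOf T f).ncard = 2 * X.ncard - 3 := by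
  have hI2 := T.card_int hT
  set I := intF T with hIdef
  have hIpos : 0 < I.card := by omega
  obtain ⟨r, hr⟩ := Finset.card_pos.mp hIpos
  have hint_mem : ∀ {v : T.V}, v ∈ I ↔ T.IsInterior v := by
    intro v; simp [hIdef, intF]
  have hrint : T.IsInterior r := hint_mem.mp hr
  set LF := I.biUnion (fun v => cordsAt T f v) with hLF
  have hset : tripletCoverOf T f = ↑LF := by
    ext c
    simp only [tripletCoverOf, Set.mem_setOf_eq, Finset.coe_biUnion, Set.mem_iUnion,
      Finset.mem_coe, hLF, Finset.mem_biUnion]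
    constructor
    · rintro ⟨v, u₁, u₂, hint, h1, h2, h12, rfl⟩
      exact ⟨v, hint_mem.mpr hint, (mem_cordsAt T).mpr ⟨u₁, u₂, h1, h2, h12, rfl⟩⟩
    · rintro ⟨v, hv, hc⟩
      obtain ⟨u₁, u₂, h1, h2, h12, rfl⟩ := (mem_cordsAt T).mp hc
      exact ⟨v, u₁, u₂, hint_mem.mp hv, h1, h2, h12, rfl⟩
  rw [hset, Set.ncard_coe_finset]
  set Sc : Sym2 α → Finset T.V := fun c => I.filter (fun v => c ∈ cordsAt T f v) with hSc
  have hsub : ∀ v ∈ I, cordsAt T f v ⊆ LF := fun v hv => Finset.subset_biUnion_of_mem _ hv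
  have hcount1 : ∑ v ∈ I, (cordsAt T f v).card = 3 * I.card := by
    rw [Finset.sum_congr rfl (fun v hv => T.cordsAt_card hT hf (hint_mem.mp hv)),
      Finset.sum_const, smul_eq_mul, mul_comm]
  have hcount2 : ∑ v ∈ I, (cordsAt T f v).card = ∑ c ∈ LF, (Sc c).card := by
    have h1 : ∀ v ∈ I, (cordsAt T f v).card
        = ∑ c ∈ LF, if c ∈ cordsAt T f v then 1 else 0 := by
      intro v hv
      rw [← Finset.card_filter, Finset.filter_mem_eq_inter,
        Finset.inter_eq_right.mpr (hsub v hv)]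
    rw [Finset.sum_congr rfl h1, Finset.sum_comm]
    refine Finset.sum_congr rfl fun c _ => ?_
    rw [hSc, Finset.card_filter]
  have hconv : ∀ c ∈ LF, ∀ v ∈ Sc c, ∀ w ∈ Sc c, ∀ z ∈ (T.treePath v w).support,
      z ∈ Sc c := by
    intro c _ v hv w hw z hz
    rw [hSc, Finset.mem_filter] at hv hw ⊢
    obtain ⟨hzint, hzc⟩ := T.convex hf (hint_mem.mp hv.1) (hint_mem.mp hw.1) hv.2 hw.2 hz
    exact ⟨hint_mem.mpr hzint, hzc⟩
  have htop : ∀ c ∈ LF, ((Sc c).filter (fun v => v = r ∨ T.tow v r ∉ Sc c)).card = 1 := by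
    intro c hc
    rw [Finset.card_eq_one]
    have hne : (Sc c).Nonempty := by
      obtain ⟨v, hv, hcv⟩ := Finset.mem_biUnion.mp hc
      exact ⟨v, Finset.mem_filter.mpr ⟨hv, hcv⟩⟩
    obtain ⟨m, hm, hmin⟩ := (Sc c).exists_min_image (fun v => (T.treePath v r).length) hne
    have hmtop : m = r ∨ T.tow m r ∉ Sc c := by
      by_cases hmr : m = r
      · exact Or.inl hmr
      · right
        intro hmem
        have hle := hmin _ hmem
        have hlt := T.tow_len hmr
        omega
    refine ⟨m, ?_⟩
    ext x
    simp only [Finset.mem_filter, Finset.mem_singleton]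
    constructor
    · rintro ⟨hx, hxtop⟩
      exact T.top_unique (hconv c hc) hx hm hxtop hmtop
    · rintro rfl
      exact ⟨hm, hmtop⟩
  have hcount3 : ∑ c ∈ LF, (Sc c).card
      = LF.card + ∑ c ∈ LF, ((Sc c).filter (fun v => ¬ (v = r ∨ T.tow v r ∉ Sc c))).card := by
    have h1 : ∀ c ∈ LF, (Sc c).card
        = 1 + ((Sc c).filter (fun v => ¬ (v = r ∨ T.tow v r ∉ Sc c))).card := by
      intro c hc
      rw [← htop c hc]
      exact (Finset.card_filter_add_card_filter_not _).symm
    rw [Finset.sum_congr rfl h1, Finset.sum_add_distrib, Finset.sum_const, smul_eq_mul,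
      mul_one]
  have hDeq : ∀ c ∈ LF, ((Sc c).filter (fun v => ¬ (v = r ∨ T.tow v r ∉ Sc c)))
      = I.filter (fun v => (c ∈ cordsAt T f v ∧ c ∈ cordsAt T f (T.tow v r)) ∧ v ≠ r) := by
    intro c _
    ext v
    simp only [hSc, Finset.filter_filter, Finset.mem_filter, not_or, not_not]
    constructor
    · rintro ⟨hvI, hcv, hvr, htow⟩
      exact ⟨hvI, ⟨hcv, htow.2⟩, hvr⟩
    · rintro ⟨hvI, ⟨hcv, hctow⟩, hvr⟩
      exact ⟨hvI, hcv, hvr,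
        hint_mem.mpr (T.tow_interior (hint_mem.mp hvI) hrint hvr), hctow⟩
  have hcount4 : ∑ c ∈ LF,
      (I.filter (fun v => (c ∈ cordsAt T f v ∧ c ∈ cordsAt T f (T.tow v r)) ∧ v ≠ r)).card
      = I.card - 1 := by
    have hswap : ∑ c ∈ LF,
        (I.filter (fun v => (c ∈ cordsAt T f v ∧ c ∈ cordsAt T f (T.tow v r)) ∧ v ≠ r)).card
        = ∑ v ∈ I, (LF.filter
            (fun c => (c ∈ cordsAt T f v ∧ c ∈ cordsAt T f (T.tow v r)) ∧ v ≠ r)).card := by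
      simp_rw [Finset.card_filter]
      rw [Finset.sum_comm]
    rw [hswap]
    have hper : ∀ v ∈ I, (LF.filter
        (fun c => (c ∈ cordsAt T f v ∧ c ∈ cordsAt T f (T.tow v r)) ∧ v ≠ r)).card
        = if v = r then 0 else 1 := by
      intro v hv
      by_cases hvr : v = r
      · simp [hvr]
      · rw [if_neg hvr]
        have hadj : T.tree.Adj v (T.tow v r) := (T.tow_spec (Ne.symm hvr)).1
        have hto_int : T.IsInterior (T.tow v r) :=
          T.tow_interior (hint_mem.mp hv) hrint hvr
        have hfilter : LF.filter
            (fun c => (c ∈ cordsAt T f v ∧ c ∈ cordsAt T f (T.tow v r)) ∧ v ≠ r)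
            = cordsAt T f v ∩ cordsAt T f (T.tow v r) := by
          ext c
          simp only [Finset.mem_filter, Finset.mem_inter]
          constructor
          · rintro ⟨_, ⟨hc1, hc2⟩, _⟩; exact ⟨hc1, hc2⟩
          · rintro ⟨hc1, hc2⟩
            exact ⟨hsub v hv hc1, ⟨hc1, hc2⟩, hvr⟩
        rw [hfilter, Finset.card_eq_one]
        obtain ⟨c₀, hc₀v, hc₀t⟩ := T.claimA_exists hf (hint_mem.mp hv) hto_int hadj
        refine ⟨c₀, ?_⟩
        ext c
        simp only [Finset.mem_inter, Finset.mem_singleton]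
        constructor
        · rintro ⟨hx1, hx2⟩
          exact T.shared_unique hf hadj.ne hx1 hx2 hc₀v hc₀t
        · rintro rfl; exact ⟨hc₀v, hc₀t⟩
    rw [Finset.sum_congr rfl hper, Finset.sum_ite, Finset.sum_const, Finset.sum_const,
      smul_eq_mul, smul_eq_mul, mul_zero, mul_one, zero_add]
    have herase : I.filter (fun v => ¬ v = r) = I.erase r := Finset.filter_ne' I r
    rw [herase, Finset.card_erase_of_mem hr]
  have hDeq' : ∀ c ∈ LF, ((Sc c).filter (fun v => ¬ (v = r ∨ T.tow v r ∉ Sc c))).card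
      = (I.filter (fun v => (c ∈ cordsAt T f v ∧ c ∈ cordsAt T f (T.tow v r)) ∧ v ≠ r)).card :=
    fun c hc => by rw [hDeq c hc]
  have hfinal : 3 * I.card = LF.card + (I.card - 1) := by
    rw [← hcount1, hcount2, hcount3, Finset.sum_congr rfl hDeq', hcount4]
  omega

end XTree

open XTree in
/-- If `L` is a stable triplet cover of a fully-resolved `X`-tree `T`
with `n := |X| ≥ 3`, then `|L| = 2n - 3`. -/
theorem stableTripletCover_card {α : Type} (X : Set α) (hfin : X.Finite)
    (hcard : 3 ≤ X.ncard) (T : XTree α X) (hT : T.IsFullyResolved)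
    (L : Set (Sym2 α)) (hL : IsStableTripletCover T L) :
    L.ncard = 2 * X.ncard - 3 := by
  obtain ⟨f, hf, rfl⟩ := hL
  exact T.tripletCoverOf_ncard hcard hT f hf
end

section
/- Let T be a fully-resolved X-tree, let w be a proper edge-weighting of T, and let d = d_{(T,w)}. If L ⊆ binom(X,2) contains a shellable lasso for T, then cl_R(L) = binom(X,2), i.e., starting from the values of d on L, repeated application of the extension rule (R) eventually assigns a d-value to every cord of X. -/
open SimpleGraph

namespace XTree

open SimpleGraph Walk

variable {α : Type} {X : Set α} (T : XTree α X)

lemma path_eq_treePath {u v : T.V} (p : T.tree.Walk u v) (hp : p.IsPath) :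
    p = T.treePath u v :=
  (T.isTree.existsUnique_path u v).unique hp (T.treePath_isPath u v)

lemma pathDist_eq_of_isPath (w : Sym2 T.V → ℝ) {u v : T.V} (p : T.tree.Walk u v)
    (hp : p.IsPath) : T.pathDist w u v = (p.edges.map w).sum := by
  rw [pathDist, ← path_eq_treePath T p hp]

/-- `u` and `v` are on the same side of the cut induced by deleting `e`. -/
def SS (e : Sym2 T.V) (u v : T.V) : Prop := (T.tree.deleteEdges {e}).Reachable u v

variable {T}

lemma SS.refl {e : Sym2 T.V} (u : T.V) : T.SS e u u := Reachable.refl u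

lemma SS.symm {e : Sym2 T.V} {u v : T.V} (h : T.SS e u v) : T.SS e v u :=
  Reachable.symm h

lemma SS.trans {e : Sym2 T.V} {u v x : T.V} (h : T.SS e u v) (h2 : T.SS e v x) :
    T.SS e u x := Reachable.trans h h2

lemma ss_of_adj {e : Sym2 T.V} {u v : T.V} (h : T.tree.Adj u v) (hne : s(u, v) ≠ e) :
    T.SS e u v := by
  refine Adj.reachable ?_
  rw [SimpleGraph.deleteEdges_adj]
  simp [h, hne]

lemma ss_of_walk {e : Sym2 T.V} {u v : T.V} (p : T.tree.Walk u v) (he : e ∉ p.edges) :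
    T.SS e u v := by
  refine ⟨p.transfer _ fun e' he' => ?_⟩
  rw [SimpleGraph.edgeSet_deleteEdges]
  refine ⟨p.edges_subset_edgeSet he', ?_⟩
  simp only [Set.mem_singleton_iff]
  rintro rfl
  exact he he'

lemma not_ss_bridge {a b : T.V} (h : T.tree.Adj a b) : ¬ T.SS s(a, b) a b := by
  have hb := (isAcyclic_iff_forall_adj_isBridge.mp T.isTree.IsAcyclic) h
  rw [isBridge_iff] at hb
  exact hb

lemma not_ss_of_mem_edges {e : Sym2 T.V} :
    ∀ {u v : T.V} (p : T.tree.Walk u v), p.IsPath → e ∈ p.edges → ¬ T.SS e u v := by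
  intro u v p
  induction p with
  | nil => simp
  | @cons u x v h q ih =>
    intro hp he hss
    have hnodup : (s(u, x) :: q.edges).Nodup := by
      simpa using hp.isTrail.edges_nodup
    rcases List.mem_cons.mp he with rfl | he'
    · have hq : s(u, x) ∉ q.edges := (List.nodup_cons.mp hnodup).1
      have h2 : T.SS s(u, x) x v := ss_of_walk q hq
      exact not_ss_bridge h (hss.trans h2.symm)
    · have hne : s(u, x) ≠ e := by
        rintro rfl
        exact (List.nodup_cons.mp hnodup).1 he'
      have h1 : T.SS e u x := ss_of_adj h hne
      exact ih hp.of_cons he' (h1.symm.trans hss)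

lemma mem_treePath_iff {e : Sym2 T.V} {u v : T.V} :
    e ∈ (T.treePath u v).edges ↔ ¬ T.SS e u v := by
  constructor
  · exact fun he => not_ss_of_mem_edges _ (T.treePath_isPath u v) he
  · intro h
    by_contra hmem
    exact h (ss_of_walk _ hmem)

lemma ss_of_not_mem_treePath {e : Sym2 T.V} {u v : T.V}
    (h : e ∉ (T.treePath u v).edges) : T.SS e u v := by
  by_contra hss
  exact h (mem_treePath_iff.mpr hss)

lemma ss_side_aux {a b : T.V} : ∀ {x c : T.V} (p : T.tree.Walk x c),
    (T.SS s(a, b) c a ∨ T.SS s(a, b) c b) → (T.SS s(a, b) x a ∨ T.SS s(a, b) x b) := by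
  intro x c p
  induction p with
  | nil => exact id
  | @cons u y _ h q ih =>
    intro hc
    by_cases he : s(u, y) = s(a, b)
    · rw [Sym2.eq_iff] at he
      rcases he with ⟨rfl, rfl⟩ | ⟨rfl, rfl⟩
      · exact Or.inl (SS.refl _)
      · exact Or.inr (SS.refl _)
    · have h1 : T.SS s(a, b) u y := ss_of_adj h he
      rcases ih hc with h2 | h2
      · exact Or.inl (h1.trans h2)
      · exact Or.inr (h1.trans h2)

lemma ss_side {a b : T.V} : ∀ (x : T.V), T.SS s(a, b) x a ∨ T.SS s(a, b) x b := by
  intro x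
  obtain ⟨p⟩ := T.isTree.isConnected.preconnected x a
  exact ss_side_aux p (Or.inl (SS.refl _))

lemma not_ss_adj {e : Sym2 T.V} {x y : T.V} (h : ¬ T.SS e x y) :
    ∃ a b : T.V, e = s(a, b) ∧ T.tree.Adj a b := by
  obtain ⟨p⟩ := T.isTree.isConnected.preconnected x y
  have hmem : e ∈ p.edges := by
    by_contra hne
    exact h (ss_of_walk p hne)
  have he : e ∈ T.tree.edgeSet := p.edges_subset_edgeSet hmem
  induction e with
  | _ a b => exact ⟨a, b, rfl, he⟩

lemma two_sides {e : Sym2 T.V} {u v : T.V} (h : ¬ T.SS e u v) :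
    ∀ x, T.SS e x u ∨ T.SS e x v := by
  obtain ⟨a, b, rfl, hadj⟩ := not_ss_adj h
  intro x
  rcases ss_side (a := a) (b := b) u with hu | hu
  · rcases ss_side (a := a) (b := b) v with hv | hv
    · exact absurd (hu.trans hv.symm) h
    · rcases ss_side (a := a) (b := b) x with hx | hx
      · exact Or.inl (hx.trans hu.symm)
      · exact Or.inr (hx.trans hv.symm)
  · rcases ss_side (a := a) (b := b) v with hv | hv
    · rcases ss_side (a := a) (b := b) x with hx | hx
      · exact Or.inr (hx.trans hv.symm)
      · exact Or.inl (hx.trans hu.symm)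
    · exact absurd (hu.trans hv.symm) h

lemma ss_support {e : Sym2 T.V} {u v t : T.V} (h : T.SS e u v)
    (ht : t ∈ (T.treePath u v).support) : T.SS e u t := by
  classical
  have hne : e ∉ (T.treePath u v).edges := fun hmem => (mem_treePath_iff.mp hmem) h
  exact ss_of_walk ((T.treePath u v).takeUntil t ht)
    (fun hmem => hne ((T.treePath u v).edges_takeUntil_subset ht hmem))

lemma exists_side (e : Sym2 T.V) : ∃ f : T.V → Prop, ∀ x y, T.SS e x y ↔ (f x ↔ f y) := by
  by_cases he : e ∈ T.tree.edgeSet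
  · induction e with
    | _ a b =>
      have hadj : T.tree.Adj a b := he
      have hab : ¬ T.SS s(a, b) a b := not_ss_bridge hadj
      refine ⟨fun x => T.SS s(a, b) x a, fun x y => ⟨fun h => ?_, fun h => ?_⟩⟩
      · constructor
        · intro hx; exact h.symm.trans hx
        · intro hy; exact h.trans hy
      · rcases ss_side (a := a) (b := b) x with hx | hx
        · exact hx.trans ((h.mp hx).symm)
        · rcases ss_side (a := a) (b := b) y with hy | hy
          · have hxa : ¬ T.SS s(a, b) x a := fun hc => hab (hc.symm.trans hx)
            exact absurd (h.mpr hy) hxa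
          · exact hx.trans hy.symm
  · refine ⟨fun _ => True, fun x y => ?_⟩
    simp only [iff_self, iff_true]
    obtain ⟨p⟩ := T.isTree.isConnected.preconnected x y
    refine ss_of_walk p fun hmem => he (p.edges_subset_edgeSet hmem)

end XTree
namespace XTree

open SimpleGraph Walk Classical

variable {α : Type} {X : Set α} {T : XTree α X}

lemma pathDist_eq_sum [Fintype T.V] [DecidableEq T.V] [Fintype T.tree.edgeSet]
    (w : Sym2 T.V → ℝ) (u v : T.V) :
    T.pathDist w u v =
      ∑ e ∈ T.tree.edgeFinset, (if T.SS e u v then 0 else w e) := by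
  classical
  set p := T.treePath u v with hp
  have hnodup : p.edges.Nodup := (T.treePath_isPath u v).isTrail.edges_nodup
  have h1 : T.pathDist w u v = ∑ e ∈ p.edges.toFinset, w e := by
    rw [pathDist, ← hp, List.sum_toFinset _ hnodup]
  rw [h1]
  rw [← Finset.sum_subset (s₁ := p.edges.toFinset) (s₂ := T.tree.edgeFinset)
    (f := fun e => if T.SS e u v then 0 else w e)]
  · refine Finset.sum_congr rfl fun e he => ?_
    rw [List.mem_toFinset] at he
    rw [if_neg (mem_treePath_iff.mp he)]
  · intro e he
    rw [List.mem_toFinset] at he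
    rw [mem_edgeFinset]
    exact p.edges_subset_edgeSet he
  · intro e _ he
    rw [List.mem_toFinset] at he
    rw [if_pos (ss_of_not_mem_treePath he)]

/-- Exclusion: two incompatible 2-2 splits cannot both occur. -/
lemma excl {e e' : Sym2 T.V} {x y u v : T.V}
    (h1 : T.SS e x y) (h2 : T.SS e u v) (h3 : ¬ T.SS e x u)
    (h4 : ¬ T.SS e' x y) (h5 : ¬ T.SS e' u v) : False := by
  obtain ⟨a', b', rfl, hadj⟩ := not_ss_adj h4
  have hee' : e ≠ s(a', b') := by
    rintro rfl
    exact h4 h1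
  have hab' : T.SS e a' b' := ss_of_adj hadj (fun hc => hee' hc.symm)
  rcases two_sides h3 a' with hxa | hua
  · -- a' on the x-side of e ; then the path u-v avoids e'
    have : T.SS s(a', b') u v := by
      apply ss_of_not_mem_treePath
      intro hmem
      have ha's : a' ∈ (T.treePath u v).support :=
        (T.treePath u v).fst_mem_support_of_mem_edges hmem
      exact h3 (hxa.symm.trans (ss_support h2 ha's).symm)
    exact h5 this
  · have : T.SS s(a', b') x y := by
      apply ss_of_not_mem_treePath
      intro hmem
      have ha's : a' ∈ (T.treePath x y).support :=
        (T.treePath x y).fst_mem_support_of_mem_edges hmem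
      exact h3 ((ss_support h1 ha's).trans hua)
    exact h4 this

end XTree
namespace XTree

open SimpleGraph Walk Classical

variable {α : Type} {X : Set α} {T : XTree α X}

set_option maxHeartbeats 2000000 in
lemma fourpt_lt (w : Sym2 T.V → ℝ) (hw : T.IsEdgeWeighting w) {P Q R S : T.V}
    (h : T.pathDist w P Q + T.pathDist w R S < T.pathDist w P R + T.pathDist w Q S) :
    T.pathDist w P R + T.pathDist w Q S = T.pathDist w P S + T.pathDist w Q R := by
  classical
  haveI := T.fintypeV
  haveI : Fintype T.tree.edgeSet := Set.Finite.fintype (Set.toFinite _)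
  rw [pathDist_eq_sum w P Q, pathDist_eq_sum w R S, pathDist_eq_sum w P R,
    pathDist_eq_sum w Q S, ← Finset.sum_add_distrib, ← Finset.sum_add_distrib] at h
  rw [pathDist_eq_sum w P R, pathDist_eq_sum w Q S, pathDist_eq_sum w P S,
    pathDist_eq_sum w Q R, ← Finset.sum_add_distrib, ← Finset.sum_add_distrib]
  by_cases hE2 : ∃ e ∈ T.tree.edgeFinset, T.SS e P R ∧ T.SS e Q S ∧ ¬ T.SS e P Q
  · exfalso
    obtain ⟨e, heF, he2⟩ := hE2
    have hle : ∑ e ∈ T.tree.edgeFinset,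
        ((if T.SS e P R then 0 else w e) + (if T.SS e Q S then 0 else w e)) ≤
        ∑ e ∈ T.tree.edgeFinset,
        ((if T.SS e P Q then 0 else w e) + (if T.SS e R S then 0 else w e)) := by
      refine Finset.sum_le_sum fun e' he' => ?_
      clear h
      obtain ⟨f, hf⟩ := exists_side (T := T) e'
      have hwe' : 0 ≤ w e' := hw e' (mem_edgeFinset.mp he')
      have hexcl : ¬ (T.SS e' P Q ∧ T.SS e' R S ∧ ¬ T.SS e' P R ∧ ¬ T.SS e' Q S) := by
        rintro ⟨a1, a2, a3, a4⟩
        exact excl he2.1 he2.2.1 he2.2.2 a3 a4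
      by_cases hp : f P <;> by_cases hq : f Q <;> by_cases hr : f R <;> by_cases hs : f S <;>
        simp only [hf, hp, hq, hr, hs, iff_true, iff_false, true_iff, false_iff,
          not_true_eq_false, not_false_eq_true, if_true, if_false, not_not,
          iff_self, if_pos, if_neg] <;>
        first
          | linarith
          | (exfalso; apply hexcl;
             refine ⟨(hf P Q).mpr ?_, (hf R S).mpr ?_,
               fun hc => absurd ((hf P R).mp hc) ?_,
               fun hc => absurd ((hf Q S).mp hc) ?_⟩ <;> tauto)
    linarith
  · by_cases hE3 : ∃ e ∈ T.tree.edgeFinset, T.SS e P S ∧ T.SS e Q R ∧ ¬ T.SS e P Q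
    · exfalso
      obtain ⟨e, heF, he3⟩ := hE3
      have heq : ∑ e ∈ T.tree.edgeFinset,
          ((if T.SS e P Q then 0 else w e) + (if T.SS e R S then 0 else w e)) =
          ∑ e ∈ T.tree.edgeFinset,
          ((if T.SS e P R then 0 else w e) + (if T.SS e Q S then 0 else w e)) := by
        refine Finset.sum_congr rfl fun e' he' => ?_
        clear h
        obtain ⟨f, hf⟩ := exists_side (T := T) e'
        have hexcl1 : ¬ (T.SS e' P Q ∧ T.SS e' R S ∧ ¬ T.SS e' P S ∧ ¬ T.SS e' Q R) := by
          rintro ⟨a1, a2, a3, a4⟩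
          exact excl he3.1 he3.2.1 he3.2.2 a3 a4
        have hexcl2 : ¬ (T.SS e' P R ∧ T.SS e' Q S ∧ ¬ T.SS e' P Q) := by
          intro hc
          exact hE2 ⟨e', he', hc⟩
        by_cases hp : f P <;> by_cases hq : f Q <;> by_cases hr : f R <;> by_cases hs : f S <;>
          simp only [hf, hp, hq, hr, hs, iff_true, iff_false, true_iff, false_iff,
            not_true_eq_false, not_false_eq_true, if_true, if_false, not_not,
            iff_self, if_pos, if_neg] <;>
          first
            | linarith
            | (exfalso; apply hexcl1;
               refine ⟨(hf P Q).mpr ?_, (hf R S).mpr ?_,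
                 fun hc => absurd ((hf P S).mp hc) ?_,
                 fun hc => absurd ((hf Q R).mp hc) ?_⟩ <;> tauto)
            | (exfalso; apply hexcl2;
               refine ⟨(hf P R).mpr ?_, (hf Q S).mpr ?_,
                 fun hc => absurd ((hf P Q).mp hc) ?_⟩ <;> tauto)
      linarith
    · refine Finset.sum_congr rfl fun e' he' => ?_
      clear h
      obtain ⟨f, hf⟩ := exists_side (T := T) e'
      have hexcl2 : ¬ (T.SS e' P R ∧ T.SS e' Q S ∧ ¬ T.SS e' P Q) := fun hc => hE2 ⟨e', he', hc⟩
      have hexcl3 : ¬ (T.SS e' P S ∧ T.SS e' Q R ∧ ¬ T.SS e' P Q) := fun hc => hE3 ⟨e', he', hc⟩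
      by_cases hp : f P <;> by_cases hq : f Q <;> by_cases hr : f R <;> by_cases hs : f S <;>
        simp only [hf, hp, hq, hr, hs, iff_true, iff_false, true_iff, false_iff,
          not_true_eq_false, not_false_eq_true, if_true, if_false, not_not,
          iff_self, if_pos, if_neg] <;>
        first
          | linarith
          | (exfalso; apply hexcl2;
             refine ⟨(hf P R).mpr ?_, (hf Q S).mpr ?_,
               fun hc => absurd ((hf P Q).mp hc) ?_⟩ <;> tauto)
          | (exfalso; apply hexcl3;
             refine ⟨(hf P S).mpr ?_, (hf Q R).mpr ?_,
               fun hc => absurd ((hf P Q).mp hc) ?_⟩ <;> tauto)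

end XTree
namespace XTree

open SimpleGraph Walk Classical

variable {α : Type} {X : Set α} {T : XTree α X}

lemma exists_first_mem {u v : T.V} (p : T.tree.Walk u v) (Sset : Set T.V) (hv : v ∈ Sset) :
    ∃ t, t ∈ Sset ∧ ∃ (q : T.tree.Walk u t) (r : T.tree.Walk t v),
      p = q.append r ∧ ∀ x ∈ q.support, x ∈ Sset → x = t := by
  induction p with
  | nil => exact ⟨_, hv, Walk.nil, Walk.nil, rfl, by simp⟩
  | @cons u y v h q ih =>
    by_cases hu : u ∈ Sset
    · refine ⟨u, hu, Walk.nil, Walk.cons h q, rfl, by simp⟩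
    · obtain ⟨t, ht, q', r', happ, hfirst⟩ := ih hv
      refine ⟨t, ht, Walk.cons h q', r', by rw [Walk.cons_append, happ], ?_⟩
      intro x hx hxS
      rw [Walk.support_cons] at hx
      rcases List.mem_cons.mp hx with rfl | hx'
      · exact absurd hxS hu
      · exact hfirst x hx' hxS

lemma first_edge {u v : T.V} (p : T.tree.Walk u v) (h : ¬ p.Nil) :
    ∃ c, T.tree.Adj u c ∧ s(u, c) ∈ p.edges := by
  rw [Walk.not_nil_iff] at h
  obtain ⟨c, hadj, q, rfl⟩ := h
  exact ⟨c, hadj, by simp⟩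

lemma exists_incident_edge {x y t : T.V} (p : T.tree.Walk x y) (hxy : x ≠ y)
    (ht : t ∈ p.support) : ∃ c, T.tree.Adj t c ∧ s(t, c) ∈ p.edges := by
  classical
  by_cases hty : t = y
  · subst hty
    obtain ⟨c, hadj, hmem⟩ := first_edge p.reverse (Walk.not_nil_of_ne (Ne.symm hxy))
    rw [Walk.edges_reverse, List.mem_reverse] at hmem
    exact ⟨c, hadj, hmem⟩
  · obtain ⟨c, hadj, hmem⟩ := first_edge (p.dropUntil t ht) (Walk.not_nil_of_ne hty)
    exact ⟨c, hadj, p.edges_dropUntil_subset ht hmem⟩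

lemma leaf_unique_nbr {x u1 u2 : T.V} (hx : x ∈ T.ι '' X)
    (h1 : T.tree.Adj x u1) (h2 : T.tree.Adj x u2) : u1 = u2 := by
  obtain ⟨z, hz⟩ := Set.ncard_eq_one.mp ((T.leaf_iff x).mpr hx)
  have e1 : u1 ∈ T.tree.neighborSet x := h1
  have e2 : u2 ∈ T.tree.neighborSet x := h2
  rw [hz, Set.mem_singleton_iff] at e1 e2
  rw [e1, e2]

set_option maxHeartbeats 1000000 in
lemma quartet_strict (w : Sym2 T.V → ℝ) (hw : T.IsProperWeighting w) {a p q b : α}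
    (hq : Quartet T a p q b) :
    T.pathDist w (T.ι a) (T.ι p) + T.pathDist w (T.ι q) (T.ι b) <
      T.pathDist w (T.ι a) (T.ι q) + T.pathDist w (T.ι p) (T.ι b) := by
  classical
  haveI := T.fintypeV
  haveI : Fintype T.tree.edgeSet := Set.Finite.fintype (Set.toFinite _)
  obtain ⟨haX, hpX, hqX, hbX, hpair, hdisj⟩ := hq
  obtain ⟨ha', hpair2⟩ := List.pairwise_cons.mp hpair
  obtain ⟨hp', hpair3⟩ := List.pairwise_cons.mp hpair2
  obtain ⟨hq', -⟩ := List.pairwise_cons.mp hpair3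
  set A := T.ι a with hA
  set P' := T.ι p with hP'
  set Q' := T.ι q with hQ'
  set B := T.ι b with hB
  have hAP' : A ≠ P' := fun hc => ha' p (by simp) (T.ι_injOn haX hpX hc)
  have hQ'B : Q' ≠ B := fun hc => hq' b (by simp) (T.ι_injOn hqX hbX hc)
  have hdisj' : ∀ v ∈ (T.treePath A P').support, v ∉ (T.treePath Q' B).support :=
    hdisj _ _ (T.treePath_isPath _ _) (T.treePath_isPath _ _)
  obtain ⟨t, ht, W1, W2, happ, hfirst⟩ := exists_first_mem (T.treePath A Q')
    {x | x ∈ (T.treePath Q' B).support} (Walk.start_mem_support _)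
  have hAnot : A ∉ (T.treePath Q' B).support := hdisj' A (Walk.start_mem_support _)
  have hAt : A ≠ t := fun hc => hAnot (hc ▸ ht)
  obtain ⟨c, hadj_tc, hece⟩ := first_edge W1.reverse (Walk.not_nil_of_ne (Ne.symm hAt))
  have he_in_W1 : s(t, c) ∈ W1.edges := by
    rw [Walk.edges_reverse, List.mem_reverse] at hece; exact hece
  have he_in_W : s(t, c) ∈ (T.treePath A Q').edges := by
    rw [happ, Walk.edges_append]; exact List.mem_append_left _ he_in_W1
  have hW1path : W1.IsPath := by
    have hWp := T.treePath_isPath A Q'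
    rw [happ] at hWp
    exact hWp.of_append_left
  have hcW1 : c ∈ W1.support := W1.snd_mem_support_of_mem_edges he_in_W1
  have hct : c ≠ t := Ne.symm hadj_tc.ne
  have hcnot : c ∉ (T.treePath Q' B).support := fun hc => hct (hfirst c hcW1 hc)
  have htnotP : t ∉ (T.treePath A P').support := fun hc => hdisj' t hc ht
  have h_nAQ : ¬ T.SS s(t, c) A Q' := mem_treePath_iff.mp he_in_W
  have h_AP : T.SS s(t, c) A P' := by
    apply ss_of_not_mem_treePath
    intro hmem
    exact htnotP ((T.treePath A P').fst_mem_support_of_mem_edges hmem)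
  have h_QB : T.SS s(t, c) Q' B := by
    apply ss_of_not_mem_treePath
    intro hmem
    exact hcnot ((T.treePath Q' B).snd_mem_support_of_mem_edges hmem)
  have h_nPB : ¬ T.SS s(t, c) P' B := fun hc => h_nAQ ((h_AP.trans hc).trans h_QB.symm)
  have heS : s(t, c) ∈ T.tree.edgeSet := hadj_tc
  have hint_t : T.IsInterior t := by
    intro hmem
    obtain ⟨c2, hadj2, hmem2⟩ := exists_incident_edge (T.treePath Q' B) hQ'B ht
    have hcc : c = c2 := leaf_unique_nbr hmem hadj_tc hadj2
    subst hcc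
    exact hcnot ((T.treePath Q' B).snd_mem_support_of_mem_edges hmem2)
  have hint_c : T.IsInterior c := by
    intro hmem
    by_cases hcA : c = A
    · obtain ⟨c3, hadj3, hmem3⟩ := first_edge (T.treePath A P') (Walk.not_nil_of_ne hAP')
      have hAdjAt : T.tree.Adj A t := by rw [← hcA]; exact hadj_tc.symm
      have hmemA : A ∈ T.ι '' X := ⟨a, haX, rfl⟩
      have htc3 : t = c3 := leaf_unique_nbr hmemA hAdjAt hadj3
      subst htc3
      exact htnotP ((T.treePath A P').snd_mem_support_of_mem_edges hmem3)
    · obtain ⟨c4, hadj4, hmem4⟩ := first_edge (W1.takeUntil c hcW1).reverse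
        (Walk.not_nil_of_ne hcA)
      rw [Walk.edges_reverse, List.mem_reverse] at hmem4
      obtain ⟨c5, hadj5, hmem5⟩ := first_edge (W1.dropUntil c hcW1)
        (Walk.not_nil_of_ne hct)
      have hc45 : c4 = c5 := leaf_unique_nbr hmem hadj4 hadj5
      subst hc45
      have hnodup := hW1path.isTrail.edges_nodup
      rw [← Walk.take_spec W1 hcW1, Walk.edges_append] at hnodup
      exact List.disjoint_of_nodup_append hnodup hmem4 hmem5
  have hwpos : 0 < w s(t, c) := by
    refine hw.2 _ heS ?_
    intro v hv
    rw [Sym2.mem_iff] at hv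
    rcases hv with rfl | rfl
    · exact hint_t
    · exact hint_c
  rw [pathDist_eq_sum w A P', pathDist_eq_sum w Q' B, pathDist_eq_sum w A Q',
    pathDist_eq_sum w P' B, ← Finset.sum_add_distrib, ← Finset.sum_add_distrib]
  refine Finset.sum_lt_sum ?_ ⟨s(t, c), mem_edgeFinset.mpr heS, ?_⟩
  · intro e' he'
    have hwe' : 0 ≤ w e' := hw.1 e' (mem_edgeFinset.mp he')
    have hexcl : ¬ (¬ T.SS e' A P' ∧ ¬ T.SS e' Q' B) := by
      rintro ⟨h1', h2'⟩
      have hm1 : e' ∈ (T.treePath A P').edges := mem_treePath_iff.mpr h1'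
      have hm2 : e' ∈ (T.treePath Q' B).edges := mem_treePath_iff.mpr h2'
      induction e' with
      | _ x₀ y₀ =>
        exact hdisj' x₀ ((T.treePath A P').fst_mem_support_of_mem_edges hm1)
          ((T.treePath Q' B).fst_mem_support_of_mem_edges hm2)
    obtain ⟨f, hf⟩ := exists_side (T := T) e'
    by_cases h1 : f A <;> by_cases h2 : f P' <;> by_cases h3 : f Q' <;> by_cases h4 : f B <;>
      simp only [hf, h1, h2, h3, h4, iff_true, iff_false, true_iff, false_iff,
        not_true_eq_false, not_false_eq_true, if_true, if_false, not_not,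
        iff_self, if_pos, if_neg] <;>
      first
        | linarith
        | (exfalso; apply hexcl;
           refine ⟨fun hc => absurd ((hf A P').mp hc) ?_,
             fun hc => absurd ((hf Q' B).mp hc) ?_⟩ <;> tauto)
  · rw [if_pos h_AP, if_pos h_QB, if_neg h_nAQ, if_neg h_nPB]
    linarith

end XTree

open XTree in
/-- Let `T` be a fully-resolved `X`-tree, `w` a proper edge-weighting and
`d = d_{(T,w)}`. If `L ⊆ binom(X,2)` contains a shellable lasso for `T`, then
`cl_R(L) = binom(X,2)`: exhaustively applying the extension rule (R) starting from the
values of `d` on `L` eventually assigns a `d`-value to every cord of `X`. -/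
theorem clR_eq_cords_of_contains_shellable {α : Type} (X : Set α) (hfin : X.Finite)
    (hcard : 3 ≤ X.ncard) (T : XTree α X) (hT : T.IsFullyResolved)
    (w : Sym2 T.V → ℝ) (hw : T.IsProperWeighting w)
    (L : Set (Sym2 α)) (hLX : L ⊆ cords X)
    (hcontains : ∃ L₀ ⊆ L, IsShellableLasso T L₀) :
    ∀ S : Set (Sym2 α) × (Sym2 α → ℝ),
      IsRClosureOf X L (T.cordDist w) S → S.1 = cords X := by
  classical
  rintro S ⟨hreach, hmax⟩
  have hcd : ∀ x y : α, T.cordDist w s(x, y) = T.pathDist w (T.ι x) (T.ι y) :=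
    fun x y => rfl
  -- Invariant along the rewriting process
  have hinv : L ⊆ S.1 ∧ S.1 ⊆ cords X ∧ S.2 = T.cordDist w := by
    clear hmax
    induction hreach with
    | refl => exact ⟨subset_rfl, hLX, rfl⟩
    | @tail b c hr hstep ih =>
      obtain ⟨hL, hsub, hd⟩ := ih
      obtain ⟨x, y, u, z, hxX, hyX, huX, hzX, hpw, m1, m2, m3, m4, m5, hnotin,
        hlt, hS1, hS2⟩ := hstep
      refine ⟨?_, ?_, ?_⟩
      · rw [hS1]; exact hL.trans (Set.subset_insert _ _)
      · rw [hS1]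
        intro cc hcc
        rcases Set.mem_insert_iff.mp hcc with rfl | hcc'
        · constructor
          · rw [Sym2.mk_isDiag_iff]
            exact (List.pairwise_cons.mp hpw).1 z (by simp)
          · intro a ha
            rw [Sym2.mem_iff] at ha
            rcases ha with rfl | rfl
            · exact hxX
            · exact hzX
        · exact hsub hcc'
      · rw [hS2, hd]
        rw [hd] at hlt
        simp only [hcd] at hlt
        have hxz := fourpt_lt w hw.1 hlt
        funext cc
        by_cases hc : cc = s(x, z)
        · rw [hc, Function.update_self, hcd, hcd, hcd, hcd]
          linarith
        · rw [Function.update_of_ne hc]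
  obtain ⟨hLS, hsub, hd2⟩ := hinv
  refine Set.Subset.antisymm hsub ?_
  intro c₀ hc₀
  by_contra hc₀S
  obtain ⟨L₀, hL₀L, hL₀cords, hcover, ord, hnodup, hordmem, hpiv⟩ := hcontains
  have hex : ∃ n, ∃ hn : n < ord.length, ord.get ⟨n, hn⟩ ∉ S.1 := by
    have hc₀L₀ : c₀ ∉ L₀ := fun hc => hc₀S (hLS (hL₀L hc))
    have hmemord : c₀ ∈ ord := (hordmem c₀).mpr ⟨hc₀, hc₀L₀⟩
    obtain ⟨⟨n, hn⟩, hget⟩ := List.mem_iff_get.mp hmemord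
    exact ⟨n, hn, by rw [hget]; exact hc₀S⟩
  obtain ⟨hilen, hinot⟩ := Nat.find_spec hex
  set i := Nat.find hex with hi
  have htake : ∀ c' ∈ ord.take i, c' ∈ S.1 := by
    intro c' hc'
    obtain ⟨⟨j, hj⟩, hgetj⟩ := List.mem_iff_get.mp hc'
    have hji : j < i := lt_of_lt_of_le hj (by rw [List.length_take]; exact min_le_left _ _)
    have hjlen : j < ord.length :=
      lt_of_lt_of_le hj (by rw [List.length_take]; exact min_le_right _ _)
    have hgj : (ord.take i).get ⟨j, hj⟩ = ord.get ⟨j, hjlen⟩ := by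
      simp [List.get_eq_getElem, List.getElem_take]
    by_contra hnotS
    exact Nat.find_min hex hji ⟨hjlen, by rw [← hgj, hgetj]; exact hnotS⟩
  obtain ⟨a, b, pp, qq, hcab, hquart, hfive⟩ := hpiv i hilen
  rw [hcab] at hinot
  have hfive' : ∀ c' ∈ [s(a, pp), s(a, qq), s(b, pp), s(b, qq), s(pp, qq)],
      c' ∈ S.1 := by
    intro c' hc'
    rcases hfive c' hc' with hL0 | htk
    · exact hLS (hL₀L hL0)
    · exact htake c' htk
  refine hmax (insert s(a, b) S.1, Function.update S.2 s(a, b)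
      (S.2 s(a, qq) + S.2 s(pp, b) - S.2 s(pp, qq)))
    ⟨a, pp, qq, b, hquart.1, hquart.2.1, hquart.2.2.1, hquart.2.2.2.1,
      hquart.2.2.2.2.1, ?_, ?_, ?_, ?_, ?_, hinot, ?_, rfl, rfl⟩
  · exact hfive' s(a, pp) (by simp)
  · exact hfive' s(pp, qq) (by simp)
  · show s(pp, b) ∈ S.1
    rw [Sym2.eq_swap]
    exact hfive' s(b, pp) (by simp)
  · exact hfive' s(a, qq) (by simp)
  · show s(qq, b) ∈ S.1
    rw [Sym2.eq_swap]
    exact hfive' s(b, qq) (by simp)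
  · rw [hd2]
    simp only [hcd]
    exact quartet_strict w hw hquart
end

section
/- Let T be a fully-resolved X-tree, let w be a proper edge-weighting of T, and let L ⊆ binom(X,2). If the initial function d agrees with d_{(T,w)} on every cord of L, then at every stage of repeated application of the extension rule (R) the extended function d agrees with d_{(T,w)} on every cord so far added; in particular the extension of d to cl_R(L) equals the restriction of d_{(T,w)} to cl_R(L). -/
open SimpleGraph

namespace TreeCutAux

variable {V : Type}

/-- `p` and `q` are on the same side of (potential) edge `e`. -/
def SameSide (G : SimpleGraph V) (e : Sym2 V) (p q : V) : Prop :=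
  (G.deleteEdges {e}).Reachable p q

lemma SameSide.symm {G : SimpleGraph V} {e : Sym2 V} {p q : V}
    (h : SameSide G e p q) : SameSide G e q p := Reachable.symm h

lemma SameSide.trans {G : SimpleGraph V} {e : Sym2 V} {p q r : V}
    (h : SameSide G e p q) (h' : SameSide G e q r) : SameSide G e p r :=
  Reachable.trans h h'

lemma sameSide_of_not_mem_edges {G : SimpleGraph V} {e : Sym2 V} {u v : V}
    {p : G.Walk u v} (he : e ∉ p.edges) : SameSide G e u v :=
  ⟨p.toDeleteEdges {e} (fun f hf hfe => he (Set.mem_singleton_iff.mp hfe ▸ hf))⟩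

/-- Key characterization: an edge is on the (unique) path between `u` and `v`
iff `u` and `v` are on different sides of `e`. -/
lemma mem_edges_iff {G : SimpleGraph V} (hG : G.IsTree) {u v : V}
    {p : G.Walk u v} (hp : p.IsPath) (e : Sym2 V) :
    e ∈ p.edges ↔ ¬ SameSide G e u v := by
  classical
  constructor
  · intro he hr
    obtain ⟨W⟩ := hr
    have hWsub : ∀ f ∈ W.edges, f ∈ G.edgeSet := by
      intro f hf
      have := W.edges_subset_edgeSet hf
      rw [edgeSet_deleteEdges] at this
      exact this.1
    have hWe : e ∉ W.edges := by
      intro hf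
      have := W.edges_subset_edgeSet hf
      rw [edgeSet_deleteEdges] at this
      exact this.2 rfl
    have hW'path : (W.transfer G hWsub).bypass.IsPath := Walk.bypass_isPath _
    have hW'edges : e ∉ (W.transfer G hWsub).bypass.edges := by
      intro hmem
      have h1 := Walk.edges_bypass_subset _ hmem
      rw [Walk.edges_transfer] at h1
      exact hWe h1
    have heq : (W.transfer G hWsub).bypass = p :=
      (hG.existsUnique_path u v).unique hW'path hp
    exact hW'edges (heq ▸ he)
  · intro hns
    by_contra he
    exact hns (sameSide_of_not_mem_edges he)

lemma not_sameSide_adj {G : SimpleGraph V} (hG : G.IsTree) {a b : V}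
    (hab : G.Adj a b) : ¬ SameSide G s(a, b) a b := by
  have hpath : (Walk.cons hab Walk.nil).IsPath := by
    simp [Walk.cons_isPath_iff, hab.ne]
  have hmem : s(a, b) ∈ (Walk.cons hab Walk.nil).edges := by simp
  exact (mem_edges_iff hG hpath s(a, b)).mp hmem

/-- Every vertex is on the side of `a` or the side of `b`. -/
lemma side_total {G : SimpleGraph V} (hG : G.IsTree) {a b : V}
    (hab : G.Adj a b) (v : V) :
    SameSide G s(a, b) v a ∨ SameSide G s(a, b) v b := by
  classical
  obtain ⟨W⟩ := hG.isConnected.preconnected v a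
  set p := W.bypass with hpdef
  have hppath : p.IsPath := Walk.bypass_isPath _
  by_cases he : s(a, b) ∈ p.edges
  · right
    have hb : b ∈ p.support := by
      apply p.fst_mem_support_of_mem_edges (t := b) (u := a)
      rw [Sym2.eq_swap]; exact he
    refine sameSide_of_not_mem_edges (p := p.takeUntil b hb) ?_
    intro hq
    have ha' : a ∈ (p.takeUntil b hb).support :=
      Walk.fst_mem_support_of_mem_edges _ hq
    have hnodup := hppath.support_nodup
    rw [← p.take_spec hb, Walk.support_append, List.nodup_append] at hnodup
    have hatail : a ∈ (p.dropUntil b hb).support.tail := by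
      have haend : a ∈ (p.dropUntil b hb).support := Walk.end_mem_support _
      rw [Walk.support_eq_cons] at haend
      rcases List.mem_cons.mp haend with h | h
      · exact absurd h.symm hab.ne'
      · exact h
    exact hnodup.2.2 a ha' a hatail rfl
  · left
    exact sameSide_of_not_mem_edges he

/-- There are exactly two sides. -/
lemma sameSide_iff {G : SimpleGraph V} (hG : G.IsTree) {e : Sym2 V}
    (he : e ∈ G.edgeSet) (p q r : V) :
    SameSide G e q r ↔ (SameSide G e p q ↔ SameSide G e p r) := by
  induction e using Sym2.ind with
  | _ a b =>
    have hab : G.Adj a b := he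
    have hnab := not_sameSide_adj hG hab
    constructor
    · intro h
      exact ⟨fun h' => h'.trans h, fun h' => h'.trans h.symm⟩
    · intro hiff
      rcases side_total hG hab q with hq | hq <;>
        rcases side_total hG hab r with hr | hr
      · exact hq.trans hr.symm
      · exfalso
        rcases side_total hG hab p with hp | hp
        · exact hnab (hp.symm.trans ((hiff.mp (hp.trans hq.symm)).trans hr))
        · exact hnab ((hq.symm.trans (hiff.mpr (hp.trans hr.symm)).symm).trans hp)
      · exfalso
        rcases side_total hG hab p with hp | hp
        · exact hnab (hp.symm.trans ((hiff.mpr (hp.trans hr.symm)).trans hq))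
        · exact hnab ((hr.symm.trans (hiff.mp (hp.trans hq.symm)).symm).trans hp)
      · exact hq.trans hr.symm

lemma sameSide_of_both_not {G : SimpleGraph V} (hG : G.IsTree) {e : Sym2 V}
    (he : e ∈ G.edgeSet) {p q r : V}
    (h1 : ¬ SameSide G e p q) (h2 : ¬ SameSide G e p r) : SameSide G e q r :=
  (sameSide_iff hG he p q r).mpr (iff_of_false h1 h2)

/-- If `p` and `q` are both on the opposite side of `e` from an endpoint `c`
of another edge `f`, then `p` and `q` are on the same side of `f`. -/
lemma cross {G : SimpleGraph V} (hG : G.IsTree) {e f : Sym2 V}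
    (he : e ∈ G.edgeSet) {c : V} (hc : c ∈ f)
    {p q : V} (hpc : ¬ SameSide G e p c) (hqc : ¬ SameSide G e q c) :
    SameSide G f p q := by
  classical
  have hpq : SameSide G e p q :=
    sameSide_of_both_not hG he (p := c)
      (fun h => hpc h.symm) (fun h => hqc h.symm)
  obtain ⟨P⟩ := hG.isConnected.preconnected p q
  set P' := P.bypass with hP'def
  have hPpath : P'.IsPath := Walk.bypass_isPath _
  have heP : e ∉ P'.edges := by
    rw [mem_edges_iff hG hPpath]
    exact fun h => h hpq
  have hfP : f ∉ P'.edges := by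
    intro hfmem
    have hcs : c ∈ P'.support := by
      induction f using Sym2.ind with
      | _ c1 c2 =>
        rcases Sym2.mem_iff.mp hc with rfl | rfl
        · exact Walk.fst_mem_support_of_mem_edges _ hfmem
        · exact Walk.snd_mem_support_of_mem_edges _ hfmem
    have hepre : e ∉ (P'.takeUntil c hcs).edges :=
      fun h => heP (Walk.edges_takeUntil_subset _ _ h)
    exact hpc (sameSide_of_not_mem_edges hepre)
  exact sameSide_of_not_mem_edges hfP

/-- Split compatibility: two edges cannot induce two different 2-2 splits
of four vertices. -/
lemma compat {G : SimpleGraph V} (hG : G.IsTree) {e f : Sym2 V}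
    (he : e ∈ G.edgeSet) (hf : f ∈ G.edgeSet) {x y u z : V}
    (hxy : SameSide G e x y) (huz : SameSide G e u z) (hxu : ¬ SameSide G e x u)
    (hxu' : SameSide G f x u) (hyz' : SameSide G f y z) (hxy' : ¬ SameSide G f x y) :
    False := by
  induction f using Sym2.ind with
  | _ c d =>
    have hcf : c ∈ s(c, d) := by simp
    by_cases hxc : SameSide G e x c
    · have huc : ¬ SameSide G e u c := fun h => hxu (hxc.trans h.symm)
      have hzc : ¬ SameSide G e z c := fun h => hxu (hxc.trans (huz.trans h).symm)
      have huz' : SameSide G s(c, d) u z := cross hG he hcf huc hzc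
      exact hxy' ((hxu'.trans huz').trans hyz'.symm)
    · have hyc : ¬ SameSide G e y c := fun h => hxc (hxy.trans h)
      exact hxy' (cross hG he hcf hxc hyc)

section CutDist

variable (G : SimpleGraph V) [Fintype V]

/-- The edge finset of `G`. -/
noncomputable def EF (G : SimpleGraph V) [Fintype V] : Finset (Sym2 V) :=
  (Set.toFinite G.edgeSet).toFinset

lemma mem_EF {e : Sym2 V} : e ∈ EF G ↔ e ∈ G.edgeSet := Set.Finite.mem_toFinset _

open Classical in
/-- Distance expressed as a sum of cut indicators. -/
noncomputable def cutDist (w : Sym2 V → ℝ) (p q : V) : ℝ :=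
  ∑ e ∈ EF G, if SameSide G e p q then 0 else w e

open Classical in
lemma walk_sum_eq_cutDist (hG : G.IsTree) (w : Sym2 V → ℝ) {u v : V}
    {p : G.Walk u v} (hp : p.IsPath) :
    (p.edges.map w).sum = cutDist G w u v := by
  have h1 : (p.edges.map w).sum = ∑ e ∈ p.edges.toFinset, w e :=
    (List.sum_toFinset w hp.isTrail.edges_nodup).symm
  have hsub : p.edges.toFinset ⊆ EF G := by
    intro e he
    rw [mem_EF]
    exact p.edges_subset_edgeSet (List.mem_toFinset.mp he)
  rw [h1, cutDist]
  have h2 : ∑ e ∈ EF G, (if SameSide G e u v then (0:ℝ) else w e)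
      = ∑ e ∈ EF G, (if e ∈ p.edges.toFinset then w e else 0) := by
    apply Finset.sum_congr rfl
    intro e _
    by_cases hs : SameSide G e u v
    · rw [if_pos hs, if_neg]
      rw [List.mem_toFinset, mem_edges_iff hG hp]
      exact fun h => h hs
    · rw [if_neg hs, if_pos]
      rw [List.mem_toFinset, mem_edges_iff hG hp]
      exact hs
  rw [h2, Finset.sum_ite_mem, Finset.inter_eq_right.mpr hsub]

open Classical in
/-- The four-point condition consequence: if one pairing sum is strictly smaller,
the other two pairing sums are equal. -/
lemma fourPoint (hG : G.IsTree) (w : Sym2 V → ℝ) (hw : ∀ e ∈ G.edgeSet, 0 ≤ w e)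
    (x y u z : V)
    (h : cutDist G w x y + cutDist G w u z < cutDist G w x u + cutDist G w y z) :
    cutDist G w x u + cutDist G w y z = cutDist G w x z + cutDist G w y u := by
  have hsum : ∀ p q p' q', cutDist G w p q + cutDist G w p' q'
      = ∑ e ∈ EF G, ((if SameSide G e p q then (0:ℝ) else w e)
          + (if SameSide G e p' q' then (0:ℝ) else w e)) := by
    intro p q p' q'
    rw [cutDist, cutDist, ← Finset.sum_add_distrib]
  rw [hsum, hsum] at h
  have hex : ∃ e0 ∈ EF G,
      ¬ ((if SameSide G e0 x u then (0:ℝ) else w e0)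
          + (if SameSide G e0 y z then (0:ℝ) else w e0)
        ≤ (if SameSide G e0 x y then (0:ℝ) else w e0)
          + (if SameSide G e0 u z then (0:ℝ) else w e0)) := by
    by_contra hc
    push_neg at hc
    exact absurd (Finset.sum_le_sum hc) (not_le.mpr h)
  obtain ⟨e0, he0m, hlt0⟩ := hex
  rw [not_le] at hlt0
  have he0 : e0 ∈ G.edgeSet := (mem_EF G).mp he0m
  have hw0 := hw e0 he0
  have i1 := sameSide_iff hG he0 x u z
  have i2 := sameSide_iff hG he0 x y z
  have hσ : SameSide G e0 x y ∧ ¬ SameSide G e0 x u ∧ ¬ SameSide G e0 x z := by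
    by_cases b1 : SameSide G e0 x y <;> by_cases b2 : SameSide G e0 x u <;>
        by_cases b3 : SameSide G e0 x z <;>
        simp only [i1, i2, b1, b2, b3] at hlt0 <;>
        try simp at hlt0
    · exact ⟨b1, b2, b3⟩
    · linarith
  obtain ⟨hb1, hb2, hb3⟩ := hσ
  have huz0 : SameSide G e0 u z := i1.mpr (iff_of_false hb2 hb3)
  rw [hsum, hsum]
  apply Finset.sum_congr rfl
  intro e hem
  have he : e ∈ G.edgeSet := (mem_EF G).mp hem
  have j1 := sameSide_iff hG he x y z
  have j2 := sameSide_iff hG he x y u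
  by_cases c1 : SameSide G e x y <;> by_cases c2 : SameSide G e x u <;>
      by_cases c3 : SameSide G e x z <;>
      simp only [j1, j2, c1, c2, c3] <;>
      try simp
  · exact (compat hG he0 he hb1 huz0 hb2 c2 (j1.mpr (iff_of_false c1 c3)) c1).elim
  · exact (compat hG he0 he hb1 huz0.symm hb3 c3 (j2.mpr (iff_of_false c1 c2)) c1).elim

end CutDist

end TreeCutAux


open XTree in
/-- Let `T` be a fully-resolved `X`-tree with proper edge-weighting `w`,
and `L ⊆ binom(X,2)`. If the initial function `d` agrees with `d_{(T,w)}` on every cord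
of `L`, then at every stage of repeated application of the extension rule (R) the
extended function agrees with `d_{(T,w)}` on every cord so far added; in particular the
extension of `d` to `cl_R(L)` equals the restriction of `d_{(T,w)}` to `cl_R(L)`. -/
theorem clR_values_agree {α : Type} (X : Set α) (hfin : X.Finite)
    (hcard : 3 ≤ X.ncard) (T : XTree α X) (hT : T.IsFullyResolved)
    (w : Sym2 T.V → ℝ) (hw : T.IsProperWeighting w)
    (L : Set (Sym2 α)) (hLX : L ⊆ cords X)
    (d : Sym2 α → ℝ) (hd : ∀ c ∈ L, d c = T.cordDist w c) :
    ∀ S : Set (Sym2 α) × (Sym2 α → ℝ),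
      Relation.ReflTransGen (RStep X) (L, d) S →
        ∀ c ∈ S.1, S.2 c = T.cordDist w c := by
  classical
  letI := T.fintypeV
  have hcd : ∀ a b : α, T.cordDist w s(a, b)
      = TreeCutAux.cutDist T.tree w (T.ι a) (T.ι b) := by
    intro a b
    show T.pathDist w (T.ι a) (T.ι b) = _
    rw [XTree.pathDist]
    exact TreeCutAux.walk_sum_eq_cutDist _ T.isTree w (T.treePath_isPath _ _)
  intro S hS
  induction hS with
  | refl =>
    intro c hc
    exact hd c hc
  | tail hab hbc ih =>
    obtain ⟨x, y, u, z, hx, hy, hu, hz, hpw, hxy, hyu, hyz, hxu, huz, hxzn, hlt, h1, h2⟩ := hbc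
    intro c0 hc0
    rw [h1, Set.mem_insert_iff] at hc0
    rcases hc0 with rfl | hc0
    · rw [h2, Function.update_self]
      have hlt' := hlt
      rw [ih _ hxy, ih _ huz, ih _ hxu, ih _ hyz] at hlt'
      rw [ih _ hxu, ih _ hyz, ih _ hyu]
      simp only [hcd] at hlt' ⊢
      have h4 := TreeCutAux.fourPoint T.tree T.isTree w hw.1
        (T.ι x) (T.ι y) (T.ι u) (T.ι z) hlt'
      linarith
    · have hne : c0 ≠ s(x, z) := fun h => hxzn (h ▸ hc0)
      rw [h2, Function.update_of_ne hne]
      exact ih c0 hc0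
end

section
/- Let T be a fully-resolved X-tree with |X| ≥ 4, let L = L_{(T,f)} be a stable triplet cover of T generated by a stable transversal f of clus(T), let x, y be a cherry of T with f({x,y}) = x, let z := f(X − {x,y}), X' := X − {y}, T' := T|X' and L' := L − {xy, yz}. Let v be the interior vertex of T adjacent to x and y, let u be the interior vertex adjacent to v, and let X_2 and X_3 be the leaf sets of the two components of T − u not containing x and y, labelled so that z ∈ X_3. Then any ordering of binom(X,2) − L that begins with a shellable ordering of binom(X',2) − L' (with respect to T'), followed by the cords ty with t ∈ X_2 in any order, followed by the cords ty with t ∈ X_3 − {z} in any order, is a shellable ordering of binom(X,2) − L with respect to T. -/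
open SimpleGraph

section Aux
open SimpleGraph
variable {V : Type} {G : SimpleGraph V}

private lemma leaf_walk_eq {s t v : V} (hnb : ∀ c, G.Adj s c → c = v)
    (p : G.Walk s t) (hv : v ∉ p.support) : t = s := by
  cases p with
  | nil => rfl
  | cons h q =>
    exact absurd (by rw [← hnb _ h]; exact (SimpleGraph.Walk.support_cons h q) ▸
      (List.mem_cons_of_mem _ q.start_mem_support)) hv

private lemma two_nbrs_of_mem_support {s t w : V} (p : G.Walk s t) (hp : p.IsPath)
    (hw : w ∈ p.support) (hws : w ≠ s) (hwt : w ≠ t) :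
    ∃ n₁ n₂, n₁ ≠ n₂ ∧ G.Adj w n₁ ∧ G.Adj w n₂ ∧ n₁ ∈ p.support ∧ n₂ ∈ p.support := by
  induction p with
  | nil => simp at hw; exact absurd hw hws
  | @cons a b c h q ih =>
    rw [Walk.support_cons, List.mem_cons] at hw
    rcases hw with rfl | hw
    · exact absurd rfl hws
    rcases (Walk.cons_isPath_iff h q).mp hp with ⟨hq, ha⟩
    by_cases hwb : w = b
    · subst hwb
      cases q with
      | nil => exact absurd rfl hwt
      | @cons b d c h2 r =>
        refine ⟨a, d, ?_, h.symm, h2, ?_, ?_⟩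
        · rintro rfl
          exact ha (by simp)
        · simp
        · simp [Walk.support_cons]
    · obtain ⟨n₁, n₂, hne, h1, h2, m1, m2⟩ := ih hq hw hwb hwt
      exact ⟨n₁, n₂, hne, h1, h2, by simp [m1], by simp [m2]⟩

private lemma enter_edge {s t : V} (S : Set V) (p : G.Walk s t) (hs : s ∉ S) (ht : t ∈ S) :
    ∃ m' m, G.Adj m' m ∧ m' ∉ S ∧ m ∈ S ∧
      ∃ R : G.Walk s m', ∀ v ∈ R.support, v ∉ S := by
  induction p with
  | nil => exact absurd ht hs
  | @cons a b c h q ih =>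
    by_cases hb : b ∈ S
    · exact ⟨a, b, h, hs, hb, Walk.nil, by simpa using hs⟩
    · obtain ⟨m', m, hadj, hm', hm, R, hR⟩ := ih hb ht
      refine ⟨m', m, hadj, hm', hm, Walk.cons h R, ?_⟩
      intro v hv
      rw [Walk.support_cons, List.mem_cons] at hv
      rcases hv with rfl | hv
      · exact hs
      · exact hR v hv

private lemma not_reachable_deleteEdges {m m' : V} (hac : G.IsAcyclic) (h : G.Adj m m') :
    ¬ (G.deleteEdges {s(m, m')}).Reachable m m' := by
  intro hr
  have hb := (isAcyclic_iff_forall_adj_isBridge.mp hac) h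
  rw [isBridge_iff] at hb
  exact hb hr

private lemma reachable_deleteEdges_of_walk {a b : V} (e : Sym2 V) (p : G.Walk a b)
    (he : e ∉ p.edges) : (G.deleteEdges {e}).Reachable a b := by
  refine ⟨p.toDeleteEdges {e} ?_⟩
  intro e' he' he''
  rw [Set.mem_singleton_iff] at he''
  exact he (he'' ▸ he')

private lemma exists_path_avoiding {a b : V} (e : Sym2 V)
    (hr : (G.deleteEdges {e}).Reachable a b) :
    ∃ p : G.Walk a b, p.IsPath ∧ e ∉ p.edges := by
  classical
  obtain ⟨q⟩ := hr
  have hsub : ∀ e' ∈ q.edges, e' ∈ G.edgeSet := by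
    intro e' he'
    have := q.edges_subset_edgeSet he'
    rw [edgeSet_deleteEdges] at this
    exact this.1
  have hnot : ∀ e' ∈ q.edges, e' ≠ e := by
    intro e' he'
    have := q.edges_subset_edgeSet he'
    rw [edgeSet_deleteEdges] at this
    simpa using this.2
  refine ⟨(q.transfer G hsub).bypass, Walk.bypass_isPath _, fun hmem => ?_⟩
  have := Walk.edges_bypass_subset _ hmem
  rw [Walk.edges_transfer] at this
  exact hnot e this rfl

end Aux

namespace XTree
open SimpleGraph
variable {α : Type} {X : Set α}

private lemma path_unique (T : XTree α X) {a b : T.V} (p q : T.tree.Walk a b)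
    (hp : p.IsPath) (hq : q.IsPath) : p = q := by
  obtain ⟨r, -, hun⟩ := T.isTree.existsUnique_path a b
  rw [hun p hp, hun q hq]

private lemma mem_image_of_mem (T : XTree α X) {a : α} (ha : a ∈ X) : T.ι a ∈ T.ι '' X :=
  ⟨a, ha, rfl⟩

private lemma interior_ne_leaf (T : XTree α X) {w : T.V} (hw : T.IsInterior w)
    {a : α} (ha : a ∈ X) : w ≠ T.ι a := by
  rintro rfl; exact hw (T.mem_image_of_mem ha)

private lemma interior_of_adj₃ (T : XTree α X) {w a b c : T.V}
    (h1 : T.tree.Adj w a) (h2 : T.tree.Adj w b) (h3 : T.tree.Adj w c)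
    (hab : a ≠ b) (hac : a ≠ c) (hbc : b ≠ c) : T.IsInterior w := by
  haveI := T.fintypeV
  intro hmem
  have h1' : ({a, b, c} : Set T.V) ⊆ T.tree.neighborSet w := by
    intro d hd
    rcases hd with rfl | rfl | rfl <;> assumption
  have hcard : 3 ≤ (T.tree.neighborSet w).ncard := by
    calc 3 = ({a, b, c} : Set T.V).ncard := by
              rw [Set.ncard_insert_of_notMem (by simp [hab, hac]),
                Set.ncard_insert_of_notMem (by simp [hbc]), Set.ncard_singleton]
      _ ≤ _ := Set.ncard_le_ncard h1' (Set.toFinite _)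
  have := (T.leaf_iff w).mpr hmem
  omega

private lemma nbhd_eq_of_adj₃ (T : XTree α X) (hT : T.IsFullyResolved) {w a b c : T.V}
    (h1 : T.tree.Adj w a) (h2 : T.tree.Adj w b) (h3 : T.tree.Adj w c)
    (hab : a ≠ b) (hac : a ≠ c) (hbc : b ≠ c) :
    T.tree.neighborSet w = {a, b, c} := by
  haveI := T.fintypeV
  have hint := T.interior_of_adj₃ h1 h2 h3 hab hac hbc
  have h1' : ({a, b, c} : Set T.V) ⊆ T.tree.neighborSet w := by
    intro d hd
    rcases hd with rfl | rfl | rfl <;> assumption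
  have hc3 : ({a, b, c} : Set T.V).ncard = 3 := by
    rw [Set.ncard_insert_of_notMem (by simp [hab, hac]),
      Set.ncard_insert_of_notMem (by simp [hbc]), Set.ncard_singleton]
  symm
  apply Set.eq_of_subset_of_ncard_le h1' _ (Set.toFinite _)
  rw [hT w hint, hc3]

private lemma leaf_adj_eq (T : XTree α X) {a : α} (ha : a ∈ X) {n : T.V}
    (h : T.tree.Adj (T.ι a) n) : ∀ c, T.tree.Adj (T.ι a) c → c = n := by
  intro c hc
  have h1 := (T.leaf_iff (T.ι a)).mpr (T.mem_image_of_mem ha)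
  obtain ⟨d, hd⟩ := Set.ncard_eq_one.mp h1
  have hcd : c ∈ T.tree.neighborSet (T.ι a) := hc
  have hnd : n ∈ T.tree.neighborSet (T.ι a) := h
  rw [hd] at hcd hnd
  rw [Set.mem_singleton_iff.mp hcd, Set.mem_singleton_iff.mp hnd]

private lemma mem_compSet_s9 (T : XTree α X) {w n : T.V} {a : α} :
    a ∈ T.compSet w n ↔ a ∈ X ∧ ∃ p : T.tree.Walk (T.ι a) n, w ∉ p.support := Iff.rfl

/-- A walk avoiding a vertex can be upgraded to a path avoiding it. -/
private lemma path_avoiding_vertex (T : XTree α X) {s t w : T.V}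
    (p : T.tree.Walk s t) (hw : w ∉ p.support) :
    ∃ q : T.tree.Walk s t, q.IsPath ∧ w ∉ q.support := by
  classical
  exact ⟨p.bypass, Walk.bypass_isPath _, fun h => hw (Walk.support_bypass_subset _ h)⟩

/-- `compSet w n` equals `sideSet s(w,n) n` for `w` interior adjacent to `n`. -/
private lemma compSet_eq_sideSet (T : XTree α X) {w n : T.V} (hw : T.IsInterior w)
    (h : T.tree.Adj w n) : T.compSet w n = T.sideSet s(w, n) n := by
  classical
  ext a
  constructor
  · rintro ⟨haX, p, hp⟩
    refine ⟨haX, reachable_deleteEdges_of_walk _ p (fun he => ?_)⟩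
    exact hp (p.fst_mem_support_of_mem_edges he)
  · rintro ⟨haX, hr⟩
    obtain ⟨p, hpath, he⟩ := exists_path_avoiding _ hr
    refine ⟨haX, p, fun hws => ?_⟩
    have hwa : w ≠ T.ι a := T.interior_ne_leaf hw haX
    have hwn : w ≠ n := h.ne
    -- dropUntil w : Walk w n equals the single edge walk, giving e ∈ p.edges
    have hdrop : (p.dropUntil w hws).IsPath := hpath.dropUntil hws
    have hsingle : (Walk.cons h Walk.nil : T.tree.Walk w n).IsPath := by
      simp [Walk.cons_isPath_iff, hwn]
    have := T.path_unique _ _ hdrop hsingle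
    have hmem : s(w, n) ∈ (p.dropUntil w hws).edges := by
      rw [this]; simp
    exact he (p.edges_dropUntil_subset hws hmem)

private lemma compSet_mem_clus_s9 (T : XTree α X) {w n : T.V} (hw : T.IsInterior w)
    (h : T.tree.Adj w n) : T.compSet w n ∈ clus T :=
  ⟨s(w, n), h, n, by simp, T.compSet_eq_sideSet hw h⟩

private lemma compSet_subset (T : XTree α X) (w n : T.V) : T.compSet w n ⊆ X :=
  fun _ ha => ha.1

/-- Distinct components around a vertex are disjoint. -/
private lemma compSet_disjoint (T : XTree α X) {w n₁ n₂ : T.V}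
    (h1 : T.tree.Adj w n₁) (h2 : T.tree.Adj w n₂) (hne : n₁ ≠ n₂) {a : α}
    (ha1 : a ∈ T.compSet w n₁) (ha2 : a ∈ T.compSet w n₂) : False := by
  obtain ⟨-, p₁, hp₁⟩ := ha1
  obtain ⟨-, p₂, hp₂⟩ := ha2
  have hww : w ∉ (p₁.reverse.append p₂).support := by
    rw [Walk.mem_support_append_iff, Walk.support_reverse]
    simp only [List.mem_reverse]
    tauto
  obtain ⟨q, hq, hwq⟩ := T.path_avoiding_vertex _ hww
  have hsingle : (Walk.cons h1.symm (Walk.cons h2 Walk.nil) : T.tree.Walk n₁ n₂).IsPath := by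
    simp [Walk.cons_isPath_iff, h1.ne', h2.ne, hne]
  have := T.path_unique _ _ hq hsingle
  rw [this] at hwq
  simp at hwq

/-- Every vertex on a path between two vertices on the `m`-side of a bridge is on that side. -/
private lemma path_side (T : XTree α X) {e : Sym2 T.V} {s t m : T.V}
    (hrs : (T.tree.deleteEdges {e}).Reachable s m)
    (hrt : (T.tree.deleteEdges {e}).Reachable t m)
    (p : T.tree.Walk s t) (hp : p.IsPath) :
    ∀ w ∈ p.support, (T.tree.deleteEdges {e}).Reachable w m := by
  classical
  intro w hws
  obtain ⟨q, hq, hqe⟩ := exists_path_avoiding e (hrs.trans hrt.symm)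
  have : p = q := T.path_unique _ _ hp hq
  subst this
  have hsub := p.edges_takeUntil_subset hws
  have : (T.tree.deleteEdges {e}).Reachable s w :=
    reachable_deleteEdges_of_walk e (p.takeUntil w hws) (fun hmem => hqe (hsub hmem))
  exact this.symm.trans hrs

/-- A leaf of `X` not reachable on side `m` of an edge is reachable on the other side. -/
private lemma side_of_not_reachable (T : XTree α X) {m m' : T.V} (h : T.tree.Adj m m')
    {c : T.V} (hcr : ¬ (T.tree.deleteEdges {s(m, m')}).Reachable c m) :
    (T.tree.deleteEdges {s(m, m')}).Reachable c m' := by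
  classical
  set e : Sym2 T.V := s(m, m') with he
  obtain ⟨p0⟩ := T.isTree.isConnected c m
  set p := p0.bypass with hpdef
  have hp : p.IsPath := Walk.bypass_isPath _
  by_cases hep : e ∈ p.edges
  · -- m' occurs on p; the prefix up to m' avoids e
    have hm' : m' ∈ p.support := p.snd_mem_support_of_mem_edges (t := m) (by rwa [he] at hep)
    refine reachable_deleteEdges_of_walk e (p.takeUntil m' hm') (fun hmem => ?_)
    have hmsup : m ∈ (p.takeUntil m' hm').support := by
      have := (p.takeUntil m' hm').fst_mem_support_of_mem_edges (u := m') (by rwa [he] at hmem)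
      exact this
    -- but m is the endpoint of p, and m ∉ takeUntil support unless m = m'
    have hnodup := hp.support_nodup
    have hspec := p.take_spec hm'
    rw [← hspec, Walk.support_append, List.nodup_append] at hnodup
    have hmdrop : m ∈ (p.dropUntil m' hm').support.tail := by
      have hmmem : m ∈ (p.dropUntil m' hm').support := Walk.end_mem_support _
      have hne : m ≠ m' := h.ne
      rw [Walk.support_eq_cons (p.dropUntil m' hm'), List.mem_cons] at hmmem
      tauto
    exact hnodup.2.2 m hmsup m hmdrop rfl
  · exact absurd (reachable_deleteEdges_of_walk e p hep) hcr

/-- From a separating cluster one obtains a quartet. -/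
private lemma quartet_of_cluster (T : XTree α X) {a p q b : α}
    (ha : a ∈ X) (hp : p ∈ X) (hq : q ∈ X) (hb : b ∈ X)
    (hdist : List.Pairwise (· ≠ ·) [a, p, q, b]) {B : Set α} (hB : B ∈ clus T)
    (haB : a ∈ B) (hpB : p ∈ B) (hqB : q ∉ B) (hbB : b ∉ B) :
    Quartet T a p q b := by
  classical
  obtain ⟨e, heE, m, hme, hBs⟩ := hB
  obtain ⟨m', rfl⟩ := Sym2.mem_iff_exists.mp hme
  have hadj : T.tree.Adj m m' := heE
  refine ⟨ha, hp, hq, hb, hdist, ?_⟩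
  intro P Q hP hQ w hwP hwQ
  subst hBs
  have hra : (T.tree.deleteEdges {s(m, m')}).Reachable (T.ι a) m := haB.2
  have hrp : (T.tree.deleteEdges {s(m, m')}).Reachable (T.ι p) m := hpB.2
  have hrq : (T.tree.deleteEdges {s(m, m')}).Reachable (T.ι q) m' :=
    T.side_of_not_reachable hadj (fun hr => hqB ⟨hq, hr⟩)
  have hrb : (T.tree.deleteEdges {s(m, m')}).Reachable (T.ι b) m' :=
    T.side_of_not_reachable hadj (fun hr => hbB ⟨hb, hr⟩)
  have h1 := T.path_side hra hrp P hP w hwP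
  have h2 := T.path_side hrq hrb Q hQ w hwQ
  exact not_reachable_deleteEdges T.isTree.IsAcyclic hadj (h1.symm.trans h2)

/-- From a quartet one obtains a separating cluster. -/
private lemma cluster_of_quartet (T : XTree α X) {a p q b : α}
    (hquart : Quartet T a p q b) :
    ∃ A ∈ clus T, a ∈ A ∧ p ∈ A ∧ q ∉ A ∧ b ∉ A := by
  classical
  obtain ⟨ha, hp, hq, hb, hdist, hdisj0⟩ := hquart
  set P := T.treePath (T.ι a) (T.ι p) with hPdef
  set Q := T.treePath (T.ι q) (T.ι b) with hQdef
  have hP : P.IsPath := T.treePath_isPath _ _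
  have hQ : Q.IsPath := T.treePath_isPath _ _
  have hdisj : ∀ w ∈ P.support, w ∉ Q.support := hdisj0 P Q hP hQ
  set S : Set T.V := {w | w ∈ P.support} with hSdef
  have hs : T.ι q ∉ S := fun hmem => hdisj _ hmem Q.start_mem_support
  have ht : T.ι a ∈ S := P.start_mem_support
  obtain ⟨m', m, hadj, hm', hm, R₁, hR₁⟩ :=
    enter_edge S (T.treePath (T.ι q) (T.ι a)) hs ht
  have heE : s(m', m) ∈ T.tree.edgeSet := hadj
  have heP : s(m', m) ∉ P.edges := fun hmem => hm' (P.fst_mem_support_of_mem_edges hmem)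
  have hnr : ¬ (T.tree.deleteEdges {s(m', m)}).Reachable m' m :=
    not_reachable_deleteEdges T.isTree.IsAcyclic hadj
  have hram : (T.tree.deleteEdges {s(m', m)}).Reachable (T.ι a) m :=
    reachable_deleteEdges_of_walk _ (P.takeUntil m hm)
      (fun hmem => heP (P.edges_takeUntil_subset hm hmem))
  have hrpm : (T.tree.deleteEdges {s(m', m)}).Reachable (T.ι p) m :=
    (reachable_deleteEdges_of_walk _ (P.dropUntil m hm)
      (fun hmem => heP (P.edges_dropUntil_subset hm hmem))).symm
  have hrqm' : (T.tree.deleteEdges {s(m', m)}).Reachable (T.ι q) m' :=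
    reachable_deleteEdges_of_walk _ R₁
      (fun hmem => hR₁ m (R₁.snd_mem_support_of_mem_edges hmem) hm)
  have hrbq : (T.tree.deleteEdges {s(m', m)}).Reachable (T.ι b) (T.ι q) := by
    refine (reachable_deleteEdges_of_walk _ Q (fun hmem => ?_)).symm
    exact hdisj m hm (Q.snd_mem_support_of_mem_edges hmem)
  refine ⟨T.sideSet s(m', m) m, ⟨s(m', m), heE, m, by simp, rfl⟩, ⟨ha, hram⟩, ⟨hp, hrpm⟩,
    ?_, ?_⟩
  · rintro ⟨-, hr⟩
    exact hnr (hrqm'.symm.trans hr)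
  · rintro ⟨-, hr⟩
    exact hnr ((hrbq.trans hrqm').symm.trans hr)

/-- Bundled set-up for the cherry reduction. -/
private structure CSetup (α : Type) (X : Set α) where
  T : XTree α X
  x : α
  y : α
  f : Set α → α
  z : α
  v : T.V
  u : T.V
  u₂ : T.V
  u₃ : T.V
  hT : T.IsFullyResolved
  hf : IsStableTransversal (clus T) f
  hxy : IsCherry T x y
  hfxy : f {x, y} = x
  hz : z = f (X \ {x, y})
  hvx : T.tree.Adj (T.ι x) v
  hvy : T.tree.Adj (T.ι y) v
  huv : T.tree.Adj v u
  hux : u ≠ T.ι x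
  huy : u ≠ T.ι y
  hu₂ : T.tree.Adj u u₂
  hu₃ : T.tree.Adj u u₃
  h23 : u₂ ≠ u₃
  h2v : u₂ ≠ v
  h3v : u₃ ≠ v
  hzX₃ : z ∈ T.compSet u u₃

namespace CSetup

variable {α : Type} {X : Set α} (S : CSetup α X)

private lemma hxX : S.x ∈ X := S.hxy.2.1
private lemma hyX : S.y ∈ X := S.hxy.2.2.1
private lemma hxny : S.x ≠ S.y := S.hxy.1
private lemma hιxy : S.T.ι S.x ≠ S.T.ι S.y :=
  fun h => S.hxny (S.T.ι_injOn S.hxX S.hyX h)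
private lemma hιxu : S.T.ι S.x ≠ S.u := S.hux.symm
private lemma hιyu : S.T.ι S.y ≠ S.u := S.huy.symm

private lemma vint : S.T.IsInterior S.v :=
  S.T.interior_of_adj₃ S.hvx.symm S.hvy.symm S.huv S.hιxy S.hιxu S.hιyu

private lemma nbr_v : S.T.tree.neighborSet S.v = {S.T.ι S.x, S.T.ι S.y, S.u} :=
  S.T.nbhd_eq_of_adj₃ S.hT S.hvx.symm S.hvy.symm S.huv S.hιxy S.hιxu S.hιyu

private lemma hvu₂ : S.v ≠ S.u₂ := S.h2v.symm
private lemma hvu₃ : S.v ≠ S.u₃ := S.h3v.symm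

private lemma uint : S.T.IsInterior S.u :=
  S.T.interior_of_adj₃ S.huv.symm S.hu₂ S.hu₃ S.hvu₂ S.hvu₃ S.h23

private lemma nbr_u : S.T.tree.neighborSet S.u = {S.v, S.u₂, S.u₃} :=
  S.T.nbhd_eq_of_adj₃ S.hT S.huv.symm S.hu₂ S.hu₃ S.hvu₂ S.hvu₃ S.h23

private lemma leafx : ∀ c, S.T.tree.Adj (S.T.ι S.x) c → c = S.v :=
  S.T.leaf_adj_eq S.hxX S.hvx

private lemma leafy : ∀ c, S.T.tree.Adj (S.T.ι S.y) c → c = S.v :=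
  S.T.leaf_adj_eq S.hyX S.hvy

private lemma hu₂x : S.u₂ ≠ S.T.ι S.x := by
  intro h
  exact S.huv.ne' (S.leafx S.u (h ▸ S.hu₂).symm)

private lemma hu₂y : S.u₂ ≠ S.T.ι S.y := by
  intro h
  exact S.huv.ne' (S.leafy S.u (h ▸ S.hu₂).symm)

private lemma hu₃x : S.u₃ ≠ S.T.ι S.x := by
  intro h
  exact S.huv.ne' (S.leafx S.u (h ▸ S.hu₃).symm)

private lemma hu₃y : S.u₃ ≠ S.T.ι S.y := by
  intro h
  exact S.huv.ne' (S.leafy S.u (h ▸ S.hu₃).symm)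

/-- Paths whose endpoints avoid the cherry region avoid `ι x`, `ι y` and `v`. -/
private lemma avoid₃ {s t : S.T.V} (p : S.T.tree.Walk s t) (hp : p.IsPath)
    (hsx : s ≠ S.T.ι S.x) (htx : t ≠ S.T.ι S.x)
    (hsy : s ≠ S.T.ι S.y) (hty : t ≠ S.T.ι S.y)
    (hsv : s ≠ S.v) (htv : t ≠ S.v) :
    S.T.ι S.x ∉ p.support ∧ S.T.ι S.y ∉ p.support ∧ S.v ∉ p.support := by
  have hxn : S.T.ι S.x ∉ p.support := by
    intro hmem
    obtain ⟨n₁, n₂, hne, h1, h2, -, -⟩ :=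
      two_nbrs_of_mem_support p hp hmem (Ne.symm hsx) (Ne.symm htx)
    exact hne ((S.leafx _ h1).trans (S.leafx _ h2).symm)
  have hyn : S.T.ι S.y ∉ p.support := by
    intro hmem
    obtain ⟨n₁, n₂, hne, h1, h2, -, -⟩ :=
      two_nbrs_of_mem_support p hp hmem (Ne.symm hsy) (Ne.symm hty)
    exact hne ((S.leafy _ h1).trans (S.leafy _ h2).symm)
  refine ⟨hxn, hyn, ?_⟩
  intro hmem
  obtain ⟨n₁, n₂, hne, h1, h2, hm1, hm2⟩ :=
    two_nbrs_of_mem_support p hp hmem (Ne.symm hsv) (Ne.symm htv)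
  have e1 : n₁ ∈ ({S.T.ι S.x, S.T.ι S.y, S.u} : Set S.T.V) := S.nbr_v ▸ h1
  have e2 : n₂ ∈ ({S.T.ι S.x, S.T.ι S.y, S.u} : Set S.T.V) := S.nbr_v ▸ h2
  rcases e1 with rfl | rfl | rfl
  · exact hxn hm1
  · exact hyn hm1
  rcases e2 with rfl | rfl | rfl
  · exact hxn hm2
  · exact hyn hm2
  · exact hne rfl

end CSetup

namespace CSetup
open SimpleGraph
variable {α : Type} {X : Set α} (S : CSetup α X)

private lemma compSet_v_x : S.T.compSet S.v (S.T.ι S.x) = {S.x} := by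
  ext a
  constructor
  · rintro ⟨haX, W, hW⟩
    have : S.T.ι a = S.T.ι S.x := by
      refine leaf_walk_eq S.leafx W.reverse ?_
      rw [Walk.support_reverse, List.mem_reverse]
      exact hW
    exact Set.mem_singleton_iff.mpr (S.T.ι_injOn haX S.hxX this)
  · rintro rfl
    exact ⟨S.hxX, Walk.nil, by simp [S.hvx.ne']⟩

private lemma compSet_v_y : S.T.compSet S.v (S.T.ι S.y) = {S.y} := by
  ext a
  constructor
  · rintro ⟨haX, W, hW⟩
    have : S.T.ι a = S.T.ι S.y := by
      refine leaf_walk_eq S.leafy W.reverse ?_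
      rw [Walk.support_reverse, List.mem_reverse]
      exact hW
    exact Set.mem_singleton_iff.mpr (S.T.ι_injOn haX S.hyX this)
  · rintro rfl
    exact ⟨S.hyX, Walk.nil, by simp [S.hvy.ne']⟩

private lemma compSet_v_u : S.T.compSet S.v S.u = X \ {S.x, S.y} := by
  ext a
  constructor
  · rintro ⟨haX, W, hW⟩
    refine ⟨haX, ?_⟩
    rintro (rfl | rfl)
    · exact S.hux (leaf_walk_eq S.leafx W hW)
    · exact S.huy (leaf_walk_eq S.leafy W hW)
  · rintro ⟨haX, hne⟩
    simp only [Set.mem_insert_iff, Set.mem_singleton_iff, not_or] at hne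
    set P := S.T.treePath (S.T.ι a) S.u with hP
    refine ⟨haX, P, ?_⟩
    refine (S.avoid₃ P (S.T.treePath_isPath _ _) ?_ ?_ ?_ ?_ ?_ ?_).2.2
    · exact fun h => hne.1 (S.T.ι_injOn haX S.hxX h)
    · exact S.hux
    · exact fun h => hne.2 (S.T.ι_injOn haX S.hyX h)
    · exact S.huy
    · exact (S.T.interior_ne_leaf S.vint haX).symm
    · exact S.huv.ne'

private lemma mem_X₂₃ {a : α} (haX : a ∈ X) (hax : a ≠ S.x) (hay : a ≠ S.y) :
    a ∈ S.T.compSet S.u S.u₂ ∨ a ∈ S.T.compSet S.u S.u₃ := by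
  have haiu : S.T.ι a ≠ S.u := (S.T.interior_ne_leaf S.uint haX).symm
  have hRp : ((S.T.treePath (S.T.ι a) S.u).reverse).IsPath :=
    (S.T.treePath_isPath _ _).reverse
  obtain ⟨b, hb, R', heq⟩ := Walk.not_nil_iff.mp
    (Walk.not_nil_of_ne (p := (S.T.treePath (S.T.ι a) S.u).reverse) (Ne.symm haiu))
  rw [heq] at hRp
  have hbm : b ∈ ({S.v, S.u₂, S.u₃} : Set S.T.V) := S.nbr_u ▸ hb
  obtain ⟨hR'p, huR'⟩ := (Walk.cons_isPath_iff _ _).mp hRp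
  rcases hbm with rfl | rfl | rfl
  · -- b = v : walk continues into the cherry, so a ∈ {x, y}, contradiction
    exfalso
    have hvia : S.v ≠ S.T.ι a := S.T.interior_ne_leaf S.vint haX
    obtain ⟨c, hc, R'', heq'⟩ := Walk.not_nil_iff.mp
      (Walk.not_nil_of_ne (p := R') hvia)
    rw [heq'] at hR'p huR'
    have hcm : c ∈ ({S.T.ι S.x, S.T.ι S.y, S.u} : Set S.T.V) := S.nbr_v ▸ hc
    obtain ⟨hR''p, hvR''⟩ := (Walk.cons_isPath_iff _ _).mp hR'p
    rcases hcm with rfl | rfl | rfl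
    · exact hax (S.T.ι_injOn haX S.hxX (leaf_walk_eq S.leafx R'' hvR''))
    · exact hay (S.T.ι_injOn haX S.hyX (leaf_walk_eq S.leafy R'' hvR''))
    · exact huR' (by simp)
  · exact Or.inl ⟨haX, R'.reverse, by rw [Walk.support_reverse, List.mem_reverse]; exact huR'⟩
  · exact Or.inr ⟨haX, R'.reverse, by rw [Walk.support_reverse, List.mem_reverse]; exact huR'⟩

private lemma compSet_u_v : S.T.compSet S.u S.v = {S.x, S.y} := by
  ext a
  constructor
  · rintro ⟨haX, W, hW⟩
    by_contra hne
    simp only [Set.mem_insert_iff, Set.mem_singleton_iff, not_or] at hne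
    rcases S.mem_X₂₃ haX hne.1 hne.2 with ⟨-, W₂, hW₂⟩ | ⟨-, W₃, hW₃⟩
    · have hww : S.u ∉ (W.reverse.append W₂).support := by
        rw [Walk.mem_support_append_iff, Walk.support_reverse]
        simp only [List.mem_reverse]
        tauto
      obtain ⟨q, hq, huq⟩ := S.T.path_avoiding_vertex _ hww
      have hsingle : (Walk.cons S.huv (Walk.cons S.hu₂ Walk.nil) :
          S.T.tree.Walk S.v S.u₂).IsPath := by
        simp [Walk.cons_isPath_iff, S.huv.ne, S.hu₂.ne, S.hvu₂]
      have := S.T.path_unique _ _ hq hsingle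
      rw [this] at huq
      simp at huq
    · have hww : S.u ∉ (W.reverse.append W₃).support := by
        rw [Walk.mem_support_append_iff, Walk.support_reverse]
        simp only [List.mem_reverse]
        tauto
      obtain ⟨q, hq, huq⟩ := S.T.path_avoiding_vertex _ hww
      have hsingle : (Walk.cons S.huv (Walk.cons S.hu₃ Walk.nil) :
          S.T.tree.Walk S.v S.u₃).IsPath := by
        simp [Walk.cons_isPath_iff, S.huv.ne, S.hu₃.ne, S.hvu₃]
      have := S.T.path_unique _ _ hq hsingle
      rw [this] at huq
      simp at huq
  · rintro (rfl | rfl)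
    · exact ⟨S.hxX, Walk.cons S.hvx Walk.nil, by simp [S.hux, S.huv.ne']⟩
    · exact ⟨S.hyX, Walk.cons S.hvy Walk.nil, by simp [S.huy, S.huv.ne']⟩

private lemma xy_mem_uv {a : α} (h : a = S.x ∨ a = S.y) : a ∈ S.T.compSet S.u S.v := by
  rw [S.compSet_u_v]
  rcases h with rfl | rfl <;> simp

private lemma not_mem_X₂ {a : α} (h : a = S.x ∨ a = S.y) : a ∉ S.T.compSet S.u S.u₂ :=
  fun hmem => S.T.compSet_disjoint S.huv.symm S.hu₂ S.hvu₂ (S.xy_mem_uv h) hmem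

private lemma not_mem_X₃ {a : α} (h : a = S.x ∨ a = S.y) : a ∉ S.T.compSet S.u S.u₃ :=
  fun hmem => S.T.compSet_disjoint S.huv.symm S.hu₃ S.hvu₃ (S.xy_mem_uv h) hmem

private lemma X₂_X₃_disjoint {a : α} (h2 : a ∈ S.T.compSet S.u S.u₂)
    (h3 : a ∈ S.T.compSet S.u S.u₃) : False :=
  S.T.compSet_disjoint S.hu₂ S.hu₃ S.h23 h2 h3

private lemma hzX : S.z ∈ X := S.hzX₃.1

private lemma hznx : S.z ≠ S.x := fun h => S.not_mem_X₃ (Or.inl h) S.hzX₃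

private lemma hzny : S.z ≠ S.y := fun h => S.not_mem_X₃ (Or.inr h) S.hzX₃

end CSetup

namespace CSetup
open SimpleGraph
variable {α : Type} {X : Set α} (S : CSetup α X)

private lemma clus_x : ({S.x} : Set α) ∈ clus S.T := by
  have := S.T.compSet_mem_clus_s9 S.vint S.hvx.symm
  rwa [S.compSet_v_x] at this

private lemma clus_y : ({S.y} : Set α) ∈ clus S.T := by
  have := S.T.compSet_mem_clus_s9 S.vint S.hvy.symm
  rwa [S.compSet_v_y] at this

private lemma clus_xy : ({S.x, S.y} : Set α) ∈ clus S.T := by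
  have := S.T.compSet_mem_clus_s9 S.uint S.huv.symm
  rwa [S.compSet_u_v] at this

private lemma clus_Xxy : X \ {S.x, S.y} ∈ clus S.T := by
  have := S.T.compSet_mem_clus_s9 S.vint S.huv
  rwa [S.compSet_v_u] at this

private lemma fx : S.f {S.x} = S.x := Set.mem_singleton_iff.mp (S.hf.1 _ S.clus_x)

private lemma fy : S.f {S.y} = S.y := Set.mem_singleton_iff.mp (S.hf.1 _ S.clus_y)

private lemma fcomp_y {w n : S.T.V} (hw : S.T.IsInterior w) (h : S.T.tree.Adj w n)
    (hfy : S.f (S.T.compSet w n) = S.y) : w = S.v ∧ n = S.T.ι S.y := by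
  have hA := S.T.compSet_mem_clus_s9 hw h
  have hyA : S.y ∈ S.T.compSet w n := hfy ▸ S.hf.1 _ hA
  obtain ⟨-, W, hW⟩ := hyA
  by_cases hn : n = S.T.ι S.y
  · subst hn
    exact ⟨S.leafy w h.symm, rfl⟩
  · exfalso
    obtain ⟨b, hb, W', heq⟩ := Walk.not_nil_iff.mp
      (Walk.not_nil_of_ne (p := W) (fun hcon => hn hcon.symm))
    rw [heq] at hW
    rw [Walk.support_cons, List.mem_cons, not_or] at hW
    have hbv : b = S.v := S.leafy b hb
    subst hbv
    have hxA : S.x ∈ S.T.compSet w n := by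
      refine ⟨S.hxX, Walk.cons S.hvx W', ?_⟩
      rw [Walk.support_cons, List.mem_cons, not_or]
      exact ⟨(S.T.interior_ne_leaf hw S.hxX).symm.symm, hW.2⟩
    have hsub : ({S.x, S.y} : Set α) ⊆ S.T.compSet w n := by
      rintro c (rfl | rfl)
      · exact hxA
      · exact hfy ▸ S.hf.1 _ hA
    have hstab := S.hf.2 _ hA _ S.clus_xy (by rw [hfy]; simp) hsub
    rw [hfy, S.hfxy] at hstab
    exact S.hxny hstab.symm

private lemma fz : S.f (X \ {S.x, S.y}) = S.z := S.hz.symm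

private lemma branch_y {w n₁ n₂ : S.T.V} (hw : S.T.IsInterior w)
    (h1 : S.T.tree.Adj w n₁) (h2 : S.T.tree.Adj w n₂) (hne : n₁ ≠ n₂)
    (hfy : S.f (S.T.compSet w n₁) = S.y) :
    s(S.f (S.T.compSet w n₁), S.f (S.T.compSet w n₂)) = s(S.x, S.y) ∨
    s(S.f (S.T.compSet w n₁), S.f (S.T.compSet w n₂)) = s(S.y, S.z) := by
  obtain ⟨rfl, rfl⟩ := S.fcomp_y hw h1 hfy
  have hn₂ : n₂ ∈ ({S.T.ι S.x, S.T.ι S.y, S.u} : Set S.T.V) := S.nbr_v ▸ h2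
  rcases hn₂ with rfl | rfl | rfl
  · left
    rw [hfy, S.compSet_v_x, S.fx, Sym2.eq_swap]
  · exact absurd rfl hne
  · right
    rw [hfy, S.compSet_v_u, S.fz]

private lemma L_y_char {L : Set (Sym2 α)} (hL : L = tripletCoverOf S.T S.f) :
    ∀ c ∈ L, S.y ∈ c → c = s(S.x, S.y) ∨ c = s(S.y, S.z) := by
  rintro c hc hyc
  rw [hL] at hc
  obtain ⟨w, n₁, n₂, hwint, h1, h2, hne, rfl⟩ := hc
  rw [Sym2.mem_iff] at hyc
  rcases hyc with hfy | hfy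
  · exact S.branch_y hwint h1 h2 hne hfy.symm
  · have := S.branch_y hwint h2 h1 hne.symm hfy.symm
    rw [Sym2.eq_swap (a := S.f (S.T.compSet w n₂))] at this
    exact this

private lemma sxy_mem {L : Set (Sym2 α)} (hL : L = tripletCoverOf S.T S.f) :
    s(S.x, S.y) ∈ L := by
  rw [hL]
  exact ⟨S.v, S.T.ι S.x, S.T.ι S.y, S.vint, S.hvx.symm, S.hvy.symm, S.hιxy,
    by rw [S.compSet_v_x, S.compSet_v_y, S.fx, S.fy]⟩

private lemma syz_mem {L : Set (Sym2 α)} (hL : L = tripletCoverOf S.T S.f) :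
    s(S.y, S.z) ∈ L := by
  rw [hL]
  exact ⟨S.v, S.T.ι S.y, S.u, S.vint, S.hvy.symm, S.huv, S.hιyu,
    by rw [S.compSet_v_y, S.compSet_v_u, S.fy, S.fz]⟩

private lemma sxz_mem {L : Set (Sym2 α)} (hL : L = tripletCoverOf S.T S.f) :
    s(S.x, S.z) ∈ L := by
  rw [hL]
  exact ⟨S.v, S.T.ι S.x, S.u, S.vint, S.hvx.symm, S.huv, S.hιxu,
    by rw [S.compSet_v_x, S.compSet_v_u, S.fx, S.fz]⟩

end CSetup

namespace CSetup
open SimpleGraph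
variable {α : Type} {X : Set α} (S : CSetup α X)

private lemma quartet_tzxy {t : α} (htX : t ∈ X) (htx : t ≠ S.x) (hty : t ≠ S.y)
    (htz : t ≠ S.z) : Quartet S.T t S.z S.x S.y := by
  refine ⟨htX, S.hzX, S.hxX, S.hyX, ?_, ?_⟩
  · refine List.Pairwise.cons ?_ (List.Pairwise.cons ?_ (List.Pairwise.cons ?_
      (List.Pairwise.cons (by simp) List.Pairwise.nil)))
    · intro c hc
      simp only [List.mem_cons, List.mem_singleton, List.not_mem_nil, or_false] at hc
      rcases hc with rfl | rfl | rfl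
      · exact htz
      · exact htx
      · exact hty
    · intro c hc
      simp only [List.mem_cons, List.mem_singleton, List.not_mem_nil, or_false] at hc
      rcases hc with rfl | rfl
      · exact S.hznx
      · exact S.hzny
    · intro c hc
      simp only [List.mem_cons, List.mem_singleton, List.not_mem_nil, or_false] at hc
      subst hc
      exact S.hxny
  · intro P Q hP hQ w hwP hwQ
    have hQeq : Q = Walk.cons S.hvx (Walk.cons S.hvy.symm Walk.nil) := by
      refine S.T.path_unique _ _ hQ ?_
      simp [Walk.cons_isPath_iff, S.hvx.ne, S.hvy.ne', S.hιxy]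
    have havoid := S.avoid₃ P hP
      (fun h => htx (S.T.ι_injOn htX S.hxX h))
      (fun h => S.hznx (S.T.ι_injOn S.hzX S.hxX h))
      (fun h => hty (S.T.ι_injOn htX S.hyX h))
      (fun h => S.hzny (S.T.ι_injOn S.hzX S.hyX h))
      (S.T.interior_ne_leaf S.vint htX).symm
      (S.T.interior_ne_leaf S.vint S.hzX).symm
    rw [hQeq] at hwQ
    simp only [Walk.support_cons, Walk.support_nil, List.mem_cons,
      List.not_mem_nil, or_false, List.mem_singleton] at hwQ
    rcases hwQ with rfl | rfl | rfl
    · exact havoid.1 hwP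
    · exact havoid.2.2 hwP
    · exact havoid.2.1 hwP

private lemma quartet_transfer (T' : XTree α (X \ {S.y})) (hT' : IsRestrictionOf T' S.T)
    {a p q b : α} (h : Quartet T' a p q b) : Quartet S.T a p q b := by
  obtain ⟨ha, hp, hq, hb, hpair, -⟩ := id h
  obtain ⟨A, hA, haA, hpA, hqA, hbA⟩ := cluster_of_quartet T' h
  rw [hT'.2] at hA
  obtain ⟨⟨B, hB, rfl⟩, -, -⟩ := hA
  exact S.T.quartet_of_cluster ha.1 hp.1 hq.1 hb.1 hpair hB haA.1 hpA.1
    (fun hmem => hqA ⟨hmem, hq⟩) (fun hmem => hbA ⟨hmem, hb⟩)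

end CSetup

end XTree


open XTree in
/-- extending a shellable ordering through a cherry. With the cherry
reduction set-up (`x, y` a cherry of `T`, `f({x,y}) = x`, `z := f(X - {x,y})`,
`X' := X - {y}`, `T' := T|X'`, `L' := L - {xy, yz}`), let `v` be the interior vertex
adjacent to `x` and `y`, `u` the interior vertex adjacent to `v`, and `X₂, X₃` the leaf
sets of the two components of `T - u` not containing `x` and `y`, with `z ∈ X₃`. Then
any ordering of `cords X - L` consisting of a shellable ordering of `cords X' - L'`
(w.r.t. `T'`), followed by the cords `ty` with `t ∈ X₂` in any order, followed by the
cords `ty` with `t ∈ X₃ - {z}` in any order, is a shellable ordering of `cords X - L`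
with respect to `T`. -/
theorem cherry_shelling_extension {α : Type} (X : Set α) (hfin : X.Finite)
    (hcard : 4 ≤ X.ncard) (T : XTree α X) (hT : T.IsFullyResolved)
    (f : Set α → α) (hf : IsStableTransversal (clus T) f)
    (L : Set (Sym2 α)) (hL : L = tripletCoverOf T f)
    (x y : α) (hxy : IsCherry T x y) (hfxy : f {x, y} = x)
    (z : α) (hz : z = f (X \ {x, y}))
    (L' : Set (Sym2 α)) (hL' : L' = L \ {s(x, y), s(y, z)})
    (T' : XTree α (X \ {y})) (hT' : IsRestrictionOf T' T)
    (v : T.V) (hvx : T.tree.Adj (T.ι x) v) (hvy : T.tree.Adj (T.ι y) v)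
    (u : T.V) (huv : T.tree.Adj v u) (hux : u ≠ T.ι x) (huy : u ≠ T.ι y)
    (u₂ u₃ : T.V) (hu₂ : T.tree.Adj u u₂) (hu₃ : T.tree.Adj u u₃)
    (h23 : u₂ ≠ u₃) (h2v : u₂ ≠ v) (h3v : u₃ ≠ v)
    (X₂ : Set α) (hX₂ : X₂ = T.compSet u u₂)
    (X₃ : Set α) (hX₃ : X₃ = T.compSet u u₃) (hzX₃ : z ∈ X₃)
    (ord' l₂ l₃ : List (Sym2 α))
    (hord' : IsShellableOrdering T' L' ord')
    (hl₂nd : l₂.Nodup) (hl₂ : ∀ c, c ∈ l₂ ↔ ∃ t ∈ X₂, c = s(t, y))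
    (hl₃nd : l₃.Nodup) (hl₃ : ∀ c, c ∈ l₃ ↔ ∃ t ∈ X₃ \ {z}, c = s(t, y)) :
    IsShellableOrdering T L (ord' ++ l₂ ++ l₃) := by
  classical
  set S : XTree.CSetup α X :=
    ⟨T, x, y, f, z, v, u, u₂, u₃, hT, hf, hxy, hfxy, hz, hvx, hvy, huv, hux, huy,
      hu₂, hu₃, h23, h2v, h3v, hX₃ ▸ hzX₃⟩ with hSdef
  -- basic facts
  have hxX : x ∈ X := hxy.2.1
  have hyX : y ∈ X := hxy.2.2.1
  have hxny : x ≠ y := hxy.1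
  have hzX : z ∈ X := S.hzX
  have hznx : z ≠ x := S.hznx
  have hzny : z ≠ y := S.hzny
  have hxyL : s(x, y) ∈ L := S.sxy_mem hL
  have hyzL : s(y, z) ∈ L := S.syz_mem hL
  have hxzL : s(x, z) ∈ L := S.sxz_mem hL
  have hychar : ∀ c ∈ L, y ∈ c → c = s(x, y) ∨ c = s(y, z) := S.L_y_char hL
  have hX₂f : ∀ t ∈ X₂, t ∈ X ∧ t ≠ x ∧ t ≠ y ∧ t ≠ z := by
    intro t ht
    rw [hX₂] at ht
    refine ⟨ht.1, ?_, ?_, ?_⟩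
    · rintro rfl; exact S.not_mem_X₂ (Or.inl rfl) ht
    · rintro rfl; exact S.not_mem_X₂ (Or.inr rfl) ht
    · rintro rfl; exact S.X₂_X₃_disjoint ht (hX₃ ▸ hzX₃)
  have hX₃f : ∀ t ∈ X₃, t ∈ X ∧ t ≠ x ∧ t ≠ y := by
    intro t ht
    rw [hX₃] at ht
    refine ⟨ht.1, ?_, ?_⟩
    · rintro rfl; exact S.not_mem_X₃ (Or.inl rfl) ht
    · rintro rfl; exact S.not_mem_X₃ (Or.inr rfl) ht
  have hpart : ∀ t ∈ X, t ≠ x → t ≠ y → t ∈ X₂ ∨ t ∈ X₃ := by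
    intro t htX htx hty
    rcases S.mem_X₂₃ htX htx hty with h | h
    · exact Or.inl (hX₂ ▸ h)
    · exact Or.inr (hX₃ ▸ h)
  have hquart : ∀ t ∈ X, t ≠ x → t ≠ y → t ≠ z → Quartet T t z x y :=
    fun t htX htx hty htz => S.quartet_tzxy htX htx hty htz
  have htrans : ∀ a p q b : α, Quartet T' a p q b → Quartet T a p q b :=
    fun a p q b h => S.quartet_transfer T' hT' h
  obtain ⟨hnd', hmem', hpiv'⟩ := hord'
  have hLL' : L' ⊆ L := hL' ▸ Set.diff_subset
  have hLdiff : ∀ c ∈ L, c ∉ L' → c = s(x, y) ∨ c = s(y, z) := by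
    intro c hc hc'
    rw [hL'] at hc'
    simp only [Set.mem_diff, hc, true_and, not_not] at hc'
    simpa using hc'
  have hyord : ∀ c ∈ ord', y ∉ c := by
    intro c hc hyc
    exact (((hmem' c).mp hc).1.2 y hyc).2 rfl
  have hmeml₂₃ : ∀ c ∈ l₂ ++ l₃, ∃ t, (t ∈ X₂ ∨ t ∈ X₃ \ {z}) ∧ c = s(t, y) := by
    intro c hc
    rw [List.mem_append] at hc
    rcases hc with hc | hc
    · obtain ⟨t, ht, rfl⟩ := (hl₂ c).mp hc
      exact ⟨t, Or.inl ht, rfl⟩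
    · obtain ⟨t, ht, rfl⟩ := (hl₃ c).mp hc
      exact ⟨t, Or.inr ht, rfl⟩
  have htfacts : ∀ t, (t ∈ X₂ ∨ t ∈ X₃ \ {z}) → t ∈ X ∧ t ≠ x ∧ t ≠ y ∧ t ≠ z := by
    rintro t (ht | ht)
    · exact hX₂f t ht
    · obtain ⟨h1, h2, h3⟩ := hX₃f t ht.1
      exact ⟨h1, h2, h3, fun hh => ht.2 (by simpa using hh)⟩
  -- cords in the restricted tree are available
  have havail : ∀ a b : α, a ∈ X → b ∈ X → a ≠ y → b ≠ y → a ≠ b →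
      s(a, b) ∈ L ∨ s(a, b) ∈ ord' := by
    intro a b ha hb hay hby hab
    by_cases hmem : s(a, b) ∈ L
    · exact Or.inl hmem
    · refine Or.inr ((hmem' _).mpr ⟨⟨?_, ?_⟩, fun hc => hmem (hLL' hc)⟩)
      · simpa using hab
      · intro c hc
        rw [Sym2.mem_iff] at hc
        rcases hc with rfl | rfl
        · exact ⟨ha, by simpa using hay⟩
        · exact ⟨hb, by simpa using hby⟩
  refine ⟨?_, ?_, ?_⟩
  · -- Nodup
    rw [List.append_assoc, List.nodup_append]
    refine ⟨hnd', ?_, ?_⟩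
    · rw [List.nodup_append]
      refine ⟨hl₂nd, hl₃nd, ?_⟩
      intro c hc2 c3 hc3 hceq
      rw [← hceq] at hc3
      obtain ⟨t, ht, rfl⟩ := (hl₂ c).mp hc2
      obtain ⟨t', ht', heq⟩ := (hl₃ _).mp hc3
      rw [Sym2.eq_iff] at heq
      rcases heq with ⟨rfl, -⟩ | ⟨rfl, hyx⟩
      · exact S.X₂_X₃_disjoint (hX₂ ▸ ht) (hX₃ ▸ ht'.1)
      · exact (hX₂f _ ht).2.2.1 rfl
    · intro c hc c2 hc23 hceq
      rw [← hceq] at hc23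
      obtain ⟨t, ht, rfl⟩ := hmeml₂₃ c hc23
      exact hyord _ hc (by simp)
  · -- membership characterization
    intro c
    constructor
    · intro hc
      rw [List.append_assoc, List.mem_append] at hc
      rcases hc with hc | hc
      · obtain ⟨⟨hd, hXm⟩, hnL'⟩ := (hmem' c).mp hc
        refine ⟨⟨hd, fun a ha => (hXm a ha).1⟩, fun hcL => ?_⟩
        rcases hLdiff c hcL hnL' with rfl | rfl
        · exact (hXm y (by simp)).2 rfl
        · exact (hXm y (by simp)).2 rfl
      · obtain ⟨t, ht, rfl⟩ := hmeml₂₃ c hc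
        obtain ⟨htX, htx, hty, htz⟩ := htfacts t ht
        refine ⟨⟨by simpa using hty, ?_⟩, ?_⟩
        · intro a ha
          rw [Sym2.mem_iff] at ha
          rcases ha with rfl | rfl
          · exact htX
          · exact hyX
        · intro hcL
          rcases hychar _ hcL (by simp) with heq | heq <;> rw [Sym2.eq_iff] at heq
          · rcases heq with ⟨rfl, -⟩ | ⟨rfl, h⟩
            · exact htx rfl
            · exact hxny h.symm
          · rcases heq with ⟨rfl, -⟩ | ⟨rfl, -⟩
            · exact hty rfl
            · exact htz rfl
    · rintro ⟨⟨hd, hXm⟩, hnL⟩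
      rw [List.append_assoc, List.mem_append]
      by_cases hyc : y ∈ c
      · right
        obtain ⟨t, rfl⟩ := Sym2.mem_iff_exists.mp hyc
        have htX : t ∈ X := hXm t (by simp)
        have hty : t ≠ y := by
          intro h
          exact hd (by rw [h]; exact Sym2.mk_isDiag_iff.mpr rfl)
        have htx : t ≠ x := by
          rintro rfl
          exact hnL (by rwa [Sym2.eq_swap] at hxyL)
        have htz : t ≠ z := by
          rintro rfl
          exact hnL hyzL
        rw [List.mem_append]
        rcases hpart t htX htx hty with h2 | h3
        · exact Or.inl ((hl₂ _).mpr ⟨t, h2, Sym2.eq_swap⟩)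
        · exact Or.inr ((hl₃ _).mpr ⟨t, ⟨h3, by simpa using htz⟩, Sym2.eq_swap⟩)
      · left
        refine (hmem' c).mpr ⟨⟨hd, fun a ha => ⟨hXm a ha, ?_⟩⟩,
          fun hc' => hnL (hLL' hc')⟩
        intro h
        rw [Set.mem_singleton_iff] at h
        exact hyc (h ▸ ha)
  · -- pivots
    intro i hi
    by_cases hcase : i < ord'.length
    · have hget : ((ord' ++ l₂) ++ l₃).get ⟨i, hi⟩ = ord'.get ⟨i, hcase⟩ := by
        show ((ord' ++ l₂) ++ l₃)[i] = ord'[i]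
        rw [List.getElem_append_left (by simp only [List.length_append]; omega),
          List.getElem_append_left hcase]
      have htake : ((ord' ++ l₂) ++ l₃).take i = ord'.take i := by
        rw [List.take_append_of_le_length (by simp only [List.length_append]; omega),
          List.take_append_of_le_length (le_of_lt hcase)]
      obtain ⟨a, b, p, q, hc, hqt, hcords⟩ := hpiv' i hcase
      refine ⟨a, b, p, q, hget ▸ hc, htrans a p q b hqt, ?_⟩
      intro c' hc'
      rcases hcords c' hc' with hcl | hce
      · exact Or.inl (hLL' hcl)
      · exact Or.inr (htake ▸ hce)
    · push_neg at hcase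
      have hlen : i - ord'.length < (l₂ ++ l₃).length := by
        have hi2 := hi
        simp only [List.length_append] at hi2 ⊢
        omega
      have hget : ((ord' ++ l₂) ++ l₃).get ⟨i, hi⟩ = (l₂ ++ l₃)[i - ord'.length]'hlen := by
        show ((ord' ++ l₂) ++ l₃)[i]'hi = _
        rw [List.getElem_of_eq (List.append_assoc ord' l₂ l₃) hi]
        exact List.getElem_append_right hcase
      have hcmem : ((ord' ++ l₂) ++ l₃).get ⟨i, hi⟩ ∈ l₂ ++ l₃ := by
        rw [hget]; exact List.getElem_mem _
      obtain ⟨t, ht, hceq⟩ := hmeml₂₃ _ hcmem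
      obtain ⟨htX, htx, hty, htz⟩ := htfacts t ht
      have hsup : ∀ c' ∈ ord', c' ∈ ((ord' ++ l₂) ++ l₃).take i := by
        intro c' hc'
        rw [List.append_assoc, List.take_append,
          List.take_of_length_le hcase, List.mem_append]
        exact Or.inl hc'
      refine ⟨t, y, z, x, hceq, hquart t htX htx hty htz, ?_⟩
      intro c' hc'
      simp only [List.mem_cons, List.not_mem_nil, or_false] at hc'
      rcases hc' with rfl | rfl | rfl | rfl | rfl
      · rcases havail t z htX hzX hty hzny htz with h | h
        · exact Or.inl h
        · exact Or.inr (hsup _ h)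
      · rcases havail t x htX hxX hty (fun h => hxny h) htx with h | h
        · exact Or.inl h
        · exact Or.inr (hsup _ h)
      · exact Or.inl hyzL
      · exact Or.inl (by rwa [Sym2.eq_swap] at hxyL)
      · exact Or.inl (by rwa [Sym2.eq_swap] at hxzL)
end

section
/- Let T be a fully-resolved X-tree with a proper edge-weighting w, let g be a stable transversal for the collection 2^X of all nonempty subsets of X (for instance g(A) = min A under a fixed total ordering of X). For each cluster A ∈ clus(T), let e be the edge of T inducing the split A | (X − A), and let A_w ⊆ A be the set of leaves in A whose weighted path distance in T to e is minimal. Then the function f defined on clus(T) by f(A) := g(A_w) is a stable transversal for clus(T). -/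
open SimpleGraph

section Helpers

open SimpleGraph

variable {V : Type} {G : SimpleGraph V}

lemma reach_or_reach_aux {u' v' : V} : ∀ {x y : V}, G.Walk x y →
    (G.deleteEdges {s(u', v')}).Reachable x y ∨
    (G.deleteEdges {s(u', v')}).Reachable x u' ∨
      (G.deleteEdges {s(u', v')}).Reachable x v' := by
  intro x y p
  induction p with
  | nil => exact Or.inl (Reachable.refl _)
  | @cons a b c h q ih =>
    by_cases hd : s(a, b) = s(u', v')
    · rw [Sym2.eq_iff] at hd
      rcases hd with ⟨rfl, rfl⟩ | ⟨rfl, rfl⟩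
      · exact Or.inr (Or.inl (Reachable.refl _))
      · exact Or.inr (Or.inr (Reachable.refl _))
    · have hAdj : (G.deleteEdges {s(u', v')}).Adj a b :=
        SimpleGraph.deleteEdges_adj.mpr ⟨h, by simpa using hd⟩
      rcases ih with h1 | h1 | h1
      · exact Or.inl (hAdj.reachable.trans h1)
      · exact Or.inr (Or.inl (hAdj.reachable.trans h1))
      · exact Or.inr (Or.inr (hAdj.reachable.trans h1))

/-- Any vertex connected to `u'` in `G` reaches `u'` or `v'` after deleting the edge
`s(u', v')`. -/
lemma reach_or_reach {u' v' x : V} (p : G.Walk x u') :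
    (G.deleteEdges {s(u', v')}).Reachable x u' ∨
      (G.deleteEdges {s(u', v')}).Reachable x v' := by
  rcases reach_or_reach_aux (v' := v') p with h | h | h
  · exact Or.inl h
  · exact Or.inl h
  · exact Or.inr h

lemma isAcyclic_deleteEdges (hG : G.IsAcyclic) (s : Set (Sym2 V)) :
    (G.deleteEdges s).IsAcyclic := by
  intro v c hc
  have hsub : ∀ e ∈ c.edges, e ∈ G.edgeSet := fun e he =>
    SimpleGraph.edgeSet_mono (SimpleGraph.deleteEdges_le s) (c.edges_subset_edgeSet he)
  exact hG (c.transfer G hsub) (hc.transfer hsub)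

end Helpers
section Leaf

open SimpleGraph XTree

variable {α : Type} {X : Set α}

/-- Each side of each edge of an `X`-tree contains a leaf. -/
lemma exists_leaf_reach (T : XTree α X) (hfin : X.Finite) (hcard : 3 ≤ X.ncard)
    {e : Sym2 T.V} (he : e ∈ T.tree.edgeSet) {u : T.V} (hu : u ∈ e) :
    ∃ a ∈ X, (T.tree.deleteEdges {e}).Reachable (T.ι a) u := by
  classical
  haveI := T.fintypeV
  set G := T.tree.deleteEdges {e} with hG
  have hacyc : G.IsAcyclic := isAcyclic_deleteEdges T.isTree.2 _
  set C : Set T.V := {x | G.Reachable u x} with hC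
  have hCfin : C.Finite := Set.toFinite _
  obtain ⟨x, hxC, hmax⟩ := Set.exists_max_image C (G.dist u) hCfin ⟨u, Reachable.refl u⟩
  have hxC' : G.Reachable u x := hxC
  -- the vertex `x` of maximal distance has at most one `G`-neighbor
  have hdegG : (G.neighborSet x).ncard ≤ 1 := by
    by_contra hdeg
    push_neg at hdeg
    obtain ⟨y1, hy1, y2, hy2, hy12⟩ := (Set.one_lt_ncard (Set.toFinite _)).mp hdeg
    rw [SimpleGraph.mem_neighborSet] at hy1 hy2
    rcases eq_or_ne u x with rfl | hne
    · have h1 : G.dist u y1 ≤ G.dist u u := hmax y1 hy1.reachable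
      rw [SimpleGraph.dist_self] at h1
      have h2 : 0 < G.dist u y1 := hy1.reachable.pos_dist_of_ne hy1.ne
      omega
    · obtain ⟨p0, hp0⟩ := hxC'.exists_walk_length_eq_dist
      have hp : p0.bypass.IsPath := p0.bypass_isPath
      have hplen : p0.bypass.length = G.dist u x :=
        le_antisymm (le_of_le_of_eq p0.length_bypass_le hp0) (SimpleGraph.dist_le _)
      set p := p0.bypass with hpdef
      have key : ∀ (y : T.V) (hy : G.Adj x y), ∃ q : G.Walk u y, q.concat hy.symm = p := by
        intro y hy
        have hyC : G.Reachable u y := hxC'.trans hy.reachable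
        obtain ⟨w0, hw0⟩ := hyC.exists_walk_length_eq_dist
        have hqp : w0.bypass.IsPath := w0.bypass_isPath
        have hqlen : w0.bypass.length = G.dist u y :=
          le_antisymm (le_of_le_of_eq w0.length_bypass_le hw0) (SimpleGraph.dist_le _)
        set q := w0.bypass with hqdef
        have hky : G.dist u y ≤ G.dist u x := hmax y hyC
        by_cases hxs : x ∈ q.support
        · exfalso
          have ht : (q.takeUntil x hxs).IsPath := hqp.takeUntil hxs
          have hteq : q.takeUntil x hxs = p :=
            congrArg Subtype.val (hacyc.path_unique ⟨q.takeUntil x hxs, ht⟩ ⟨p, hp⟩)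
          have hlen : q.length = (q.takeUntil x hxs).length + (q.dropUntil x hxs).length := by
            conv_lhs => rw [← q.take_spec hxs]
            exact Walk.length_append _ _
          have hdrop : (q.dropUntil x hxs).length ≠ 0 := fun h0 =>
            hy.ne (Walk.eq_of_length_eq_zero h0)
          rw [hteq, hplen] at hlen
          omega
        · refine ⟨q, ?_⟩
          have hcp : (q.concat hy.symm).IsPath := by
            rw [← Walk.isPath_reverse_iff, Walk.reverse_concat, Walk.cons_isPath_iff]
            exact ⟨hqp.reverse, by simpa [Walk.support_reverse] using hxs⟩
          exact congrArg Subtype.val (hacyc.path_unique ⟨q.concat hy.symm, hcp⟩ ⟨p, hp⟩)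
      obtain ⟨q1, hq1⟩ := key y1 hy1
      obtain ⟨q2, hq2⟩ := key y2 hy2
      obtain ⟨hv, -⟩ := Walk.concat_inj (hq1.trans hq2.symm)
      exact hy12 hv
  -- the `T`-degree of `x` is at most 2
  obtain ⟨v0, hv0⟩ : ∃ v0, e = s(u, v0) := ⟨Sym2.Mem.other hu, (Sym2.other_spec hu).symm⟩
  have huv0 : u ≠ v0 := by
    have hnd : ¬ e.IsDiag := T.tree.not_isDiag_of_mem_edgeSet he
    rw [hv0] at hnd
    simpa using hnd
  set c : T.V := if x = u then v0 else u with hcdef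
  have hTsub : T.tree.neighborSet x ⊆ G.neighborSet x ∪ {c} := by
    intro y hy
    rw [SimpleGraph.mem_neighborSet] at hy
    by_cases hd : s(x, y) = e
    · right
      rw [hv0, Sym2.eq_iff] at hd
      rcases hd with ⟨h1, h2⟩ | ⟨h1, h2⟩
      · simp [hcdef, h1, h2]
      · have hxu : x ≠ u := fun hh => huv0 (hh.symm.trans h1)
        simp only [Set.mem_singleton_iff, hcdef, if_neg hxu, h2]
    · left
      rw [SimpleGraph.mem_neighborSet, hG, SimpleGraph.deleteEdges_adj]
      exact ⟨hy, by simpa using hd⟩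
  have hTdeg : (T.tree.neighborSet x).ncard ≤ 2 := by
    have h1 : (T.tree.neighborSet x).ncard ≤ (G.neighborSet x ∪ {c}).ncard :=
      Set.ncard_le_ncard hTsub (Set.toFinite _)
    have h2 : (G.neighborSet x ∪ {c}).ncard ≤ (G.neighborSet x).ncard + ({c} : Set T.V).ncard :=
      Set.ncard_union_le _ _
    have h3 : ({c} : Set T.V).ncard = 1 := Set.ncard_singleton _
    omega
  -- the `T`-degree of `x` is at least 1
  have hV2 : ∃ y : T.V, y ≠ x := by
    obtain ⟨a0, ha0, b0, hb0, hab⟩ := (Set.one_lt_ncard hfin).mp (by omega)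
    have hiab : T.ι a0 ≠ T.ι b0 := fun h => hab (T.ι_injOn ha0 hb0 h)
    by_cases h : T.ι a0 = x
    · exact ⟨T.ι b0, fun hh => hiab (h.trans hh.symm)⟩
    · exact ⟨T.ι a0, h⟩
  have hpos : (T.tree.neighborSet x).Nonempty := by
    obtain ⟨y, hy⟩ := hV2
    obtain ⟨pw⟩ := T.isTree.1.preconnected x y
    cases pw with
    | nil => exact absurd rfl hy
    | cons h q => exact ⟨_, h⟩
  have hdeg1 : (T.tree.neighborSet x).ncard = 1 := by
    have h0 : 0 < (T.tree.neighborSet x).ncard := (Set.ncard_pos (Set.toFinite _)).mpr hpos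
    have h2 := T.no_deg_two x
    omega
  obtain ⟨a, haX, hax⟩ := (T.leaf_iff x).mp hdeg1
  exact ⟨a, haX, hax ▸ hxC'.symm⟩

end Leaf
section Rest

open SimpleGraph XTree

variable {α : Type} {X : Set α}

lemma pathDist_split (T : XTree α X) (w : Sym2 T.V → ℝ) {x z y : T.V}
    (hy : y ∈ (T.treePath x z).support) :
    T.pathDist w x z = T.pathDist w x y + T.pathDist w y z := by
  classical
  have hp := T.treePath_isPath x z
  have ht : ((T.treePath x z).takeUntil y hy).IsPath := hp.takeUntil hy
  have hd : ((T.treePath x z).dropUntil y hy).IsPath := hp.dropUntil hy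
  have h1 : T.treePath x y = (T.treePath x z).takeUntil y hy :=
    (T.isTree.existsUnique_path x y).unique (T.treePath_isPath x y) ht
  have h2 : T.treePath y z = (T.treePath x z).dropUntil y hy :=
    (T.isTree.existsUnique_path y z).unique (T.treePath_isPath y z) hd
  unfold XTree.pathDist
  rw [h1, h2]
  conv_lhs => rw [← (T.treePath x z).take_spec hy]
  rw [Walk.edges_append, List.map_append, List.sum_append]

lemma not_reach_side (T : XTree α X) (hfin : X.Finite) (hcard : 3 ≤ X.ncard)
    {e e' : Sym2 T.V} (he : e ∈ T.tree.edgeSet) (he' : e' ∈ T.tree.edgeSet)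
    {u u' : T.V} (hu : u ∈ e) (hu' : u' ∈ e')
    (hsub : T.sideSet e' u' ⊆ T.sideSet e u) (hne : T.sideSet e' u' ≠ T.sideSet e u) :
    ¬ (T.tree.deleteEdges {e'}).Reachable u' u := by
  classical
  intro R
  obtain ⟨v0, hv0⟩ : ∃ v0, e = s(u, v0) := ⟨Sym2.Mem.other hu, (Sym2.other_spec hu).symm⟩
  obtain ⟨v0', hv0'⟩ : ∃ v0', e' = s(u', v0') := ⟨Sym2.Mem.other hu', (Sym2.other_spec hu').symm⟩
  have hbridge := isAcyclic_iff_forall_edge_isBridge.mp T.isTree.2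
  have hbe : ¬ (T.tree.deleteEdges {e}).Reachable u v0 := by
    have h := hbridge (hv0 ▸ he)
    rw [isBridge_iff] at h
    rw [hv0]
    exact h
  have hbe' : ¬ (T.tree.deleteEdges {e'}).Reachable u' v0' := by
    have h := hbridge (hv0' ▸ he')
    rw [isBridge_iff] at h
    rw [hv0']
    exact h
  by_cases hee : e = e'
  · subst hee
    rw [hv0, Sym2.mem_iff] at hu'
    rcases hu' with h | h
    · exact hne (by rw [h])
    · subst h
      exact hbe R.symm
  · -- `e ≠ e'` : everything on the `v0'`-side of `e'` is on one side of `e`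
    have W : ∀ x : T.V, (T.tree.deleteEdges {e'}).Reachable x v0' →
        (T.tree.deleteEdges {e}).Reachable x v0' := by
      intro x hx
      obtain ⟨p⟩ := hx
      have hnotE : e ∉ p.edges := by
        intro hE
        have hus : u ∈ p.support := by
          rw [hv0] at hE
          exact Walk.fst_mem_support_of_mem_edges p hE
        exact hbe' (R.trans ⟨p.dropUntil u hus⟩)
      have hsubE : ∀ d ∈ p.edges, d ∈ T.tree.edgeSet := fun d hd =>
        SimpleGraph.edgeSet_mono (SimpleGraph.deleteEdges_le _) (p.edges_subset_edgeSet hd)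
      refine ⟨(p.transfer T.tree hsubE).toDeleteEdges {e} ?_⟩
      intro d hd
      rw [Walk.edges_transfer] at hd
      simp only [Set.mem_singleton_iff]
      intro hde
      exact hnotE (hde ▸ hd)
    have P : ∀ x : T.V, (T.tree.deleteEdges {e'}).Reachable x u' ∨
        (T.tree.deleteEdges {e'}).Reachable x v0' := by
      intro x
      obtain ⟨pw⟩ := T.isTree.1.preconnected x u'
      rw [hv0']
      exact reach_or_reach pw
    obtain ⟨a0, ha0A, ha0B⟩ := Set.exists_of_ssubset (ssubset_of_subset_of_ne hsub hne)
    obtain ⟨ha0X, hra0⟩ := ha0A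
    have hnra0 : ¬ (T.tree.deleteEdges {e'}).Reachable (T.ι a0) u' :=
      fun hr => ha0B ⟨ha0X, hr⟩
    have h1 : (T.tree.deleteEdges {e'}).Reachable (T.ι a0) v0' :=
      (P (T.ι a0)).resolve_left hnra0
    have h2 : (T.tree.deleteEdges {e}).Reachable v0' u := (W _ h1).symm.trans hra0
    have hv0e : v0 ∈ e := by rw [hv0]; exact Sym2.mem_mk_right u v0
    obtain ⟨c, hcX, hrc⟩ := exists_leaf_reach T hfin hcard he hv0e
    have hcA : c ∉ T.sideSet e u := fun hc => hbe (hc.2.symm.trans hrc)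
    have hcB : ¬ (T.tree.deleteEdges {e'}).Reachable (T.ι c) u' :=
      fun hr => hcA (hsub ⟨hcX, hr⟩)
    have h3 : (T.tree.deleteEdges {e'}).Reachable (T.ι c) v0' := (P _).resolve_left hcB
    exact hcA ⟨hcX, (W _ h3).trans h2⟩

end Rest

open XTree in
/-- Let `T` be a fully-resolved `X`-tree with a proper edge-weighting `w`
and `g` a stable transversal for the collection of all nonempty subsets of `X`. If, for
each cluster `A ∈ clus(T)` with inducing edge `e` (whose endpoint on the `A`-side is
`u`), `f(A) = g(A_w)` where `A_w` is the set of leaves of `A` closest to `e`, then `f`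
is a stable transversal for `clus(T)`. -/
theorem closest_leaves_stable_transversal {α : Type} (X : Set α) (hfin : X.Finite)
    (hcard : 3 ≤ X.ncard) (T : XTree α X) (hT : T.IsFullyResolved)
    (w : Sym2 T.V → ℝ) (hw : T.IsProperWeighting w)
    (g : Set α → α) (hg : IsStableTransversal {A : Set α | A ⊆ X ∧ A.Nonempty} g)
    (f : Set α → α)
    (hf : ∀ A ∈ clus T, ∀ e ∈ T.tree.edgeSet, ∀ u, u ∈ e → A = T.sideSet e u →
      f A = g {a | a ∈ A ∧ ∀ b ∈ A, T.pathDist w (T.ι a) u ≤ T.pathDist w (T.ι b) u}) :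
    IsStableTransversal (clus T) f := by
  classical
  obtain ⟨hg1, hg2⟩ := hg
  constructor
  · -- f A ∈ A
    intro A hA
    obtain ⟨e, he, u, hu, hAe⟩ := hA
    have hfA := hf A ⟨e, he, u, hu, hAe⟩ e he u hu hAe
    set M := {a | a ∈ A ∧ ∀ b ∈ A, T.pathDist w (T.ι a) u ≤ T.pathDist w (T.ι b) u} with hM
    have hAX : A ⊆ X := by rw [hAe]; exact fun a ha => ha.1
    obtain ⟨a1, ha1X, ha1r⟩ := exists_leaf_reach T hfin hcard he hu
    have ha1 : a1 ∈ A := by rw [hAe]; exact ⟨ha1X, ha1r⟩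
    obtain ⟨a0, ha0, hmin⟩ := Set.exists_min_image A (fun a => T.pathDist w (T.ι a) u)
      (hfin.subset hAX) ⟨a1, ha1⟩
    have hMne : M.Nonempty := ⟨a0, ha0, hmin⟩
    have hMX : M ⊆ X := fun a ha => hAX ha.1
    have hgM : g M ∈ M := hg1 M ⟨hMX, hMne⟩
    rw [hfA]
    exact hgM.1
  · -- stability
    intro A hA B hB hfAB hBA
    by_cases hABeq : A = B
    · rw [hABeq]
    obtain ⟨e, he, u, hu, hAe⟩ := hA
    obtain ⟨e', he', u', hu', hBe⟩ := hB
    have hfA := hf A ⟨e, he, u, hu, hAe⟩ e he u hu hAe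
    have hfB := hf B ⟨e', he', u', hu', hBe⟩ e' he' u' hu' hBe
    have hAX : A ⊆ X := by rw [hAe]; exact fun a ha => ha.1
    have hBX : B ⊆ X := fun b hb => hAX (hBA hb)
    -- no reachability from u' to u after deleting e'
    have hsub : T.sideSet e' u' ⊆ T.sideSet e u := by rw [← hAe, ← hBe]; exact hBA
    have hne : T.sideSet e' u' ≠ T.sideSet e u := by rw [← hAe, ← hBe]; exact fun h => hABeq h.symm
    have H := not_reach_side T hfin hcard he he' hu hu' hsub hne
    obtain ⟨v0', hv0'⟩ : ∃ v0', e' = s(u', v0') := ⟨Sym2.Mem.other hu', (Sym2.other_spec hu').symm⟩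
    -- the key additivity along the path
    have key : ∀ b ∈ B, T.pathDist w (T.ι b) u =
        T.pathDist w (T.ι b) u' + T.pathDist w u' u := by
      intro b hb
      have hbr : (T.tree.deleteEdges {e'}).Reachable (T.ι b) u' := by
        have := hBe ▸ hb
        exact this.2
      have hsupp : u' ∈ (T.treePath (T.ι b) u).support := by
        by_contra hns
        set p := T.treePath (T.ι b) u with hp
        have hnotE : e' ∉ p.edges := by
          intro hE
          rw [hv0'] at hE
          exact hns (Walk.fst_mem_support_of_mem_edges p hE)
        have hreach : (T.tree.deleteEdges {e'}).Reachable (T.ι b) u := by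
          refine ⟨p.toDeleteEdges {e'} ?_⟩
          intro d hd
          simp only [Set.mem_singleton_iff]
          intro hde
          exact hnotE (hde ▸ hd)
        exact H (hbr.symm.trans hreach)
      exact pathDist_split T w hsupp
    -- the minimizing sets
    set MA := {a | a ∈ A ∧ ∀ b ∈ A, T.pathDist w (T.ι a) u ≤ T.pathDist w (T.ι b) u} with hMA
    set MB := {a | a ∈ B ∧ ∀ b ∈ B, T.pathDist w (T.ι a) u' ≤ T.pathDist w (T.ι b) u'} with hMB
    have hMAne : MA.Nonempty := by
      obtain ⟨a0, ha0, hmin⟩ := Set.exists_min_image A (fun a => T.pathDist w (T.ι a) u)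
        (hfin.subset hAX) ⟨f A, hBA hfAB⟩
      exact ⟨a0, ha0, hmin⟩
    have hMAX : MA ⊆ X := fun a ha => hAX ha.1
    have hgMA : g MA ∈ MA := hg1 MA ⟨hMAX, hMAne⟩
    have hgB : g MA ∈ B := hfA ▸ hfAB
    have claim1 : g MA ∈ MB := by
      refine ⟨hgB, fun b hb => ?_⟩
      have h1 := key _ hgB
      have h2 := key _ hb
      have h3 := hgMA.2 b (hBA hb)
      linarith
    have claim2 : MB ⊆ MA := by
      rintro b ⟨hbB, hbmin⟩
      refine ⟨hBA hbB, fun a ha => ?_⟩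
      have h1 := key _ hbB
      have h2 := hbmin _ hgB
      have h3 := key _ hgB
      have h4 := hgMA.2 a ha
      linarith
    have hMBX : MB ⊆ X := fun b hb => hBX hb.1
    have final := hg2 MA ⟨hMAX, hMAne⟩ MB ⟨hMBX, ⟨g MA, claim1⟩⟩ claim1 claim2
    rw [hfA, hfB, final]
end
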